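/- arXiv:2207.06038 — 2 statements merged into one kernel-verified Lean document; each statement's English description precedes it below -/
import Mathlib

section
/- Let E be a Banach lattice and A an almost L-set in E'. If (f_n) is a sequence in the solid hull Sol(A) with |f_n| → 0 in the weak* topology, then (f_n) is an L-sequence. -/
open Filter Topology

section Defs

variable {X : Type*} [NormedAddCommGroup X] [NormedSpace ℝ X]

/-- A sequence is weakly Cauchy if every continuous functional converges along it. -/
def WeaklyCauchy (x : ℕ → X) : Prop :=
  ∀ f : X →L[ℝ] ℝ, ∃ a : ℝ, Tendsto (fun n => f (x n)) atTop (𝓝 a)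

/-- A set is weakly precompact if every sequence from it has a weakly Cauchy subsequence. -/
def WeaklyPrecompact (A : Set X) : Prop :=
  ∀ x : ℕ → X, (∀ n, x n ∈ A) → ∃ φ : ℕ → ℕ, StrictMono φ ∧ WeaklyCauchy (fun n => x (φ n))

/-- A weakly null sequence. -/
def WeaklyNull (x : ℕ → X) : Prop :=
  ∀ f : X →L[ℝ] ℝ, Tendsto (fun n => f (x n)) atTop (𝓝 0)

/-- An L-set in the dual: weakly null sequences of the space converge to zero
uniformly on the set. -/
def IsLSet (B : Set (X →L[ℝ] ℝ)) : Prop :=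
  ∀ x : ℕ → X, WeaklyNull x → ∀ ε > 0, ∃ N, ∀ k ≥ N, ∀ f ∈ B, |f (x k)| ≤ ε

/-- An L-sequence in the dual. -/
def IsLSequence (f : ℕ → X →L[ℝ] ℝ) : Prop := IsLSet (Set.range f)

/-- A weak* null sequence of functionals. -/
def WeakStarNull (f : ℕ → X →L[ℝ] ℝ) : Prop :=
  ∀ x : X, Tendsto (fun n => f n x) atTop (𝓝 0)

/-- Relative weak compactness, in its (Eberlein–Šmulian) sequential form: every
sequence from the set has a subsequence converging weakly to a point of the space. -/
def RelWeaklyCompact (A : Set X) : Prop :=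
  ∀ x : ℕ → X, (∀ n, x n ∈ A) → ∃ φ : ℕ → ℕ, StrictMono φ ∧ ∃ a : X,
    ∀ f : X →L[ℝ] ℝ, Tendsto (fun n => f (x (φ n))) atTop (𝓝 (f a))

/-- A weakly precompact operator: the image of the closed unit ball is weakly precompact. -/
def WeaklyPrecompactOp {Y : Type*} [NormedAddCommGroup Y] [NormedSpace ℝ Y]
    (T : X →L[ℝ] Y) : Prop :=
  WeaklyPrecompact (T '' Metric.closedBall 0 1)

/-- A Dunford–Pettis operator maps weakly null sequences to norm null sequences. -/
def DunfordPettisOp {Y : Type*} [NormedAddCommGroup Y] [NormedSpace ℝ Y]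
    (S : X →L[ℝ] Y) : Prop :=
  ∀ x : ℕ → X, WeaklyNull x → Tendsto (fun n => ‖S (x n)‖) atTop (𝓝 0)

/-- A sequence equivalent to the unit vector basis of ℓ¹. -/
def EquivL1Basis (x : ℕ → X) : Prop :=
  ∃ c C : ℝ, 0 < c ∧ ∀ (s : Finset ℕ) (α : ℕ → ℝ),
    c * ∑ i ∈ s, |α i| ≤ ‖∑ i ∈ s, α i • x i‖ ∧
      ‖∑ i ∈ s, α i • x i‖ ≤ C * ∑ i ∈ s, |α i|

end Defs

section LatticeDefs

variable {E : Type*} [NormedAddCommGroup E] [Lattice E] [HasSolidNorm E] [IsOrderedAddMonoid E] [NormedSpace ℝ E]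

/-- The value of the modulus |f| of a functional on a positive element, via the
Riesz–Kantorovich formula: |f|(x) = sup {f y : |y| ≤ x}. -/
noncomputable def dualAbs (f : E →L[ℝ] ℝ) (x : E) : ℝ :=
  sSup ((fun y => f y) '' {y : E | |y| ≤ x})

/-- |f| ≤ |g| in the dual lattice, expressed on the positive cone. -/
def DualAbsLE (f g : E →L[ℝ] ℝ) : Prop :=
  ∀ x : E, 0 ≤ x → dualAbs f x ≤ dualAbs g x

/-- Disjointness of two functionals: (|f| ⊓ |g|)(x) = 0 for every x ≥ 0, via the
Riesz–Kantorovich formula for the infimum. -/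
def DualDisjoint (f g : E →L[ℝ] ℝ) : Prop :=
  ∀ x : E, 0 ≤ x → ∀ ε > 0, ∃ y : E, 0 ≤ y ∧ y ≤ x ∧ dualAbs f y + dualAbs g (x - y) ≤ ε

/-- An almost L-set in the dual: disjoint weakly null sequences of the space
converge to zero uniformly on the set. -/
def AlmostLSet (B : Set (E →L[ℝ] ℝ)) : Prop :=
  ∀ x : ℕ → E, (Pairwise fun m n => |x m| ⊓ |x n| = 0) → WeaklyNull x →
    ∀ ε > 0, ∃ N, ∀ k ≥ N, ∀ f ∈ B, |f (x k)| ≤ ε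

/-- The solid hull of a subset of a Banach lattice. -/
def latticeSolidHull (A : Set E) : Set E := {x : E | ∃ y ∈ A, |x| ≤ |y|}

/-- An order weakly precompact operator: order intervals are mapped to weakly
precompact sets. -/
def OrderWeaklyPrecompactOp {X : Type*} [NormedAddCommGroup X] [NormedSpace ℝ X]
    (T : E →L[ℝ] X) : Prop :=
  ∀ x : E, 0 ≤ x → WeaklyPrecompact (T '' Set.Icc (-x) x)

/-- An order weakly compact operator: order intervals are mapped to relatively
weakly compact sets. -/
def OrderWeaklyCompactOp {X : Type*} [NormedAddCommGroup X] [NormedSpace ℝ X]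
    (T : E →L[ℝ] X) : Prop :=
  ∀ x : E, 0 ≤ x → RelWeaklyCompact (T '' Set.Icc (-x) x)

/-- An AM-compact operator: order intervals are mapped to relatively norm compact sets. -/
def AMCompactOp {X : Type*} [NormedAddCommGroup X] [NormedSpace ℝ X]
    (T : E →L[ℝ] X) : Prop :=
  ∀ x : E, 0 ≤ x → IsCompact (closure (T '' Set.Icc (-x) x))

/-- Order continuity of the norm of the dual E′: every downward directed set of
positive functionals whose greatest lower bound is 0 contains functionals of
arbitrarily small norm (f_α ↓ 0 implies ‖f_α‖ → 0). -/
def DualOrderContinuousNorm (E : Type*) [NormedAddCommGroup E] [Lattice E] [HasSolidNorm E] [IsOrderedAddMonoid E]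
    [NormedSpace ℝ E] : Prop :=
  ∀ D : Set (E →L[ℝ] ℝ), D.Nonempty →
    (∀ f ∈ D, ∀ x : E, 0 ≤ x → 0 ≤ f x) →
    (∀ f ∈ D, ∀ g ∈ D, ∃ h ∈ D,
      (∀ x : E, 0 ≤ x → h x ≤ f x) ∧ (∀ x : E, 0 ≤ x → h x ≤ g x)) →
    (∀ g : E →L[ℝ] ℝ, (∀ f ∈ D, ∀ x : E, 0 ≤ x → g x ≤ f x) →
      ∀ x : E, 0 ≤ x → g x ≤ 0) →
    ∀ ε > 0, ∃ f ∈ D, ‖f‖ ≤ ε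

/-- σ-Dedekind completeness: every order bounded sequence has a supremum. -/
def SigmaDedekindComplete (E : Type*) [NormedAddCommGroup E] [Lattice E] [HasSolidNorm E] [IsOrderedAddMonoid E] : Prop :=
  ∀ f : ℕ → E, BddAbove (Set.range f) → ∃ s, IsLUB (Set.range f) s

end LatticeDefs


section LatticeAux

variable {E : Type*} [NormedAddCommGroup E] [Lattice E] [HasSolidNorm E] [IsOrderedAddMonoid E] [NormedSpace ℝ E]

/-- Generic recursion with choice. -/
lemma exists_rec_aux {α : Type*} (init : α) (P : ℕ → α → α → Prop)
    (h : ∀ j s, ∃ s', P j s s') :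
    ∃ F : ℕ → α, F 0 = init ∧ ∀ j, P j (F j) (F (j+1)) := by
  refine ⟨fun n => Nat.rec init (fun j s => Classical.choose (h j s)) n, rfl, fun j => ?_⟩
  exact Classical.choose_spec (h j _)

lemma inf_add_le_of_nonneg {a b c : E} (ha : 0 ≤ a) (hb : 0 ≤ b) (hc : 0 ≤ c) :
    (a + b) ⊓ c ≤ a ⊓ c + b ⊓ c := by
  have h1 : (a + b) ⊓ c ≤ a + b ⊓ c := by
    have h2 : (a + b) ⊓ c ≤ (a + b) ⊓ (a + c) :=
      inf_le_inf_left _ (le_add_of_nonneg_left ha)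
    calc (a + b) ⊓ c ≤ (a + b) ⊓ (a + c) := h2
    _ = a + b ⊓ c := (add_inf b c a).symm
  have h3 : (a + b) ⊓ c - b ⊓ c ≤ a := sub_le_iff_le_add.mpr h1
  have h4 : (a + b) ⊓ c - b ⊓ c ≤ c :=
    le_trans (sub_le_self _ (le_inf hb hc)) inf_le_right
  have h5 := le_inf h3 h4
  exact sub_le_iff_le_add.mp h5

lemma disj_add {a b c : E} (ha : 0 ≤ a) (hb : 0 ≤ b) (hc : 0 ≤ c)
    (h1 : a ⊓ c = 0) (h2 : b ⊓ c = 0) : (a + b) ⊓ c = 0 :=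
  le_antisymm (by simpa [h1, h2] using inf_add_le_of_nonneg ha hb hc)
    (le_inf (add_nonneg ha hb) hc)

lemma disj_nsmul (n : ℕ) {a c : E} (ha : 0 ≤ a) (hc : 0 ≤ c) (h : a ⊓ c = 0) :
    (n • a) ⊓ c = 0 := by
  induction n with
  | zero => simpa using inf_eq_left.mpr hc
  | succ n ih =>
      have : ((n • a) + a) ⊓ c = 0 := disj_add (nsmul_nonneg ha n) ha hc ih h
      simpa [succ_nsmul] using this

/-- Sum of a finite family, pairwise disjoint with `q`, is disjoint with `q`. -/
lemma sum_disj {ι : Type*} (S : Finset ι) (p : ι → E) {q : E}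
    (hp : ∀ i ∈ S, 0 ≤ p i) (hq : 0 ≤ q) (hd : ∀ i ∈ S, p i ⊓ q = 0) :
    (∑ i ∈ S, p i) ⊓ q = 0 := by
  induction S using Finset.cons_induction_on with
  | empty => simpa using inf_eq_left.mpr hq
  | @cons a S' hnot ih =>
      rw [Finset.sum_cons]
      exact disj_add (hp a (Finset.mem_cons_self a S'))
        (Finset.sum_nonneg fun i hi => hp i (Finset.mem_cons_of_mem hi)) hq
        (hd a (Finset.mem_cons_self a S'))
        (ih (fun i hi => hp i (Finset.mem_cons_of_mem hi))
          (fun i hi => hd i (Finset.mem_cons_of_mem hi)))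

/-- A finite sum of pairwise disjoint positive elements below `x` is below `x`. -/
lemma sum_le_of_pairwise_disj {ι : Type*} (S : Finset ι) (p : ι → E) {x : E} (hx0 : 0 ≤ x)
    (hp : ∀ i ∈ S, 0 ≤ p i) (hx : ∀ i ∈ S, p i ≤ x)
    (hd : ∀ i ∈ S, ∀ j ∈ S, i ≠ j → p i ⊓ p j = 0) :
    ∑ i ∈ S, p i ≤ x := by
  induction S using Finset.cons_induction_on with
  | empty => simpa using hx0
  | @cons a S' hnot ih =>
      rw [Finset.sum_cons]
      have hdisj : (∑ i ∈ S', p i) ⊓ p a = 0 :=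
        sum_disj S' p (fun i hi => hp i (Finset.mem_cons_of_mem hi))
          (hp a (Finset.mem_cons_self a S'))
          (fun i hi => hd i (Finset.mem_cons_of_mem hi) a (Finset.mem_cons_self a S')
            (fun hia => hnot (hia ▸ hi)))
      have hs : ∑ i ∈ S', p i ≤ x :=
        ih (fun i hi => hp i (Finset.mem_cons_of_mem hi))
          (fun i hi => hx i (Finset.mem_cons_of_mem hi))
          (fun i hi j hj hij => hd i (Finset.mem_cons_of_mem hi) j (Finset.mem_cons_of_mem hj) hij)
      have : p a + ∑ i ∈ S', p i = p a ⊔ ∑ i ∈ S', p i := by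
        rw [← inf_add_sup (p a) (∑ i ∈ S', p i), inf_comm, hdisj, zero_add]
      rw [this]
      exact sup_le (hx a (Finset.mem_cons_self a S')) hs

set_option linter.unusedSectionVars false

lemma posPart_add_inf' (a u : E) : (a - u)⁺ + a ⊓ u = a := by
  have h1 : a - a ⊓ u = (a - u)⁺ := by
    rw [sub_inf, sub_self]
    rw [sup_comm]
    rfl
  rw [← h1]; abel

lemma posPart_le_sub_posPart_add {t c : E} (hc : 0 ≤ c) : t⁺ ≤ (t - c)⁺ + c := by
  refine sup_le ?_ (add_nonneg (posPart_nonneg _) hc)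
  calc t = (t - c) + c := by abel
  _ ≤ (t - c)⁺ + c := add_le_add_left (le_posPart _) c

lemma posPart_mono' {a b : E} (h : a ≤ b) : a⁺ ≤ b⁺ := sup_le_sup_right h 0

lemma nsmul_nonneg_cancel {n : ℕ} (hn : 0 < n) {v : E} (h : 0 ≤ n • v) : 0 ≤ v := by
  have hd : (n • v⁺) ⊓ v⁻ = 0 :=
    disj_nsmul n (posPart_nonneg _) (negPart_nonneg _) (posPart_inf_negPart_eq_zero v)
  have hsub : n • v = n • v⁺ - n • v⁻ := by
    rw [← smul_sub]
    exact congrArg _ (posPart_sub_negPart v).symm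
  have h2 : n • v⁻ ≤ n • v⁺ := by
    have := h
    rw [hsub, sub_nonneg] at this
    exact this
  have h3 : v⁻ ≤ n • v⁻ := by
    obtain ⟨m, rfl⟩ := Nat.exists_eq_succ_of_ne_zero hn.ne'
    rw [succ_nsmul]
    exact le_add_of_nonneg_left (nsmul_nonneg (negPart_nonneg _) m)
  have h4 : v⁻ ≤ n • v⁺ := le_trans h3 h2
  have h5 : v⁻ = 0 := by
    have := inf_eq_left.mpr h4  -- v⁻ ⊓ (n•v⁺) = v⁻
    rw [inf_comm] at hd
    rw [← this, hd]
  rw [← posPart_sub_negPart v, h5, sub_zero]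
  exact posPart_nonneg _

lemma rsmul_nonneg {c : ℝ} (hc : 0 ≤ c) {x : E} (hx : 0 ≤ x) : 0 ≤ c • x := by
  -- approximate c by nonnegative rationals of the form m / (i+1)
  have key : ∀ i : ℕ, 0 ≤ ((⌈c * (i+1)⌉₊ : ℝ) / (i+1)) • x := by
    intro i
    have hi : (0:ℝ) < (i+1 : ℕ) := by positivity
    apply nsmul_nonneg_cancel (n := i+1) (Nat.succ_pos i)
    have : (i+1 : ℕ) • (((⌈c * (i+1)⌉₊ : ℝ) / (i+1)) • x) = (⌈c * (i+1)⌉₊ : ℕ) • x := by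
      rw [← Nat.cast_smul_eq_nsmul ℝ (i+1), ← Nat.cast_smul_eq_nsmul ℝ (⌈c * (i+1)⌉₊),
        smul_smul]
      congr 1
      push_cast
      field_simp
    rw [this]
    exact nsmul_nonneg hx _
  have htend : Tendsto (fun i : ℕ => ((⌈c * (i+1)⌉₊ : ℝ) / (i+1)) • x) atTop (𝓝 (c • x)) := by
    have h1 : Tendsto (fun i : ℕ => ((⌈c * (i+1)⌉₊ : ℝ) / (i+1))) atTop (𝓝 c) := by
      have hsq : ∀ i : ℕ, c ≤ ((⌈c * (i+1)⌉₊ : ℝ) / (i+1)) ∧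
          ((⌈c * (i+1)⌉₊ : ℝ) / (i+1)) ≤ c + 1/(i+1) := by
        intro i
        have hi : (0:ℝ) < ((i:ℝ)+1) := by positivity
        constructor
        · rw [le_div_iff₀ hi]
          have := Nat.le_ceil (c * ((i:ℕ)+1))
          push_cast at this ⊢
          linarith
        · rw [div_le_iff₀ hi]
          have h2 : (⌈c * ((i:ℝ)+1)⌉₊ : ℝ) < c * (i+1) + 1 :=
            Nat.ceil_lt_add_one (by positivity)
          push_cast at h2 ⊢
          have : (c + 1/((i:ℝ)+1)) * ((i:ℝ)+1) = c * ((i:ℝ)+1) + 1 := by field_simp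
          linarith
      have hup : Tendsto (fun i : ℕ => c + 1/((i:ℕ)+1:ℝ)) atTop (𝓝 (c + 0)) :=
        tendsto_const_nhds.add (tendsto_one_div_add_atTop_nhds_zero_nat)
      rw [add_zero] at hup
      exact tendsto_of_tendsto_of_tendsto_of_le_of_le tendsto_const_nhds hup
        (fun i => (hsq i).1) (fun i => by have := (hsq i).2; push_cast at this ⊢; linarith)
    exact h1.smul_const x
  have hcl : IsClosed (Set.Ici (0:E)) := isClosed_Ici
  exact hcl.mem_of_tendsto htend (Eventually.of_forall key)

lemma rsmul_le_rsmul {c : ℝ} (hc : 0 ≤ c) {x y : E} (h : x ≤ y) : c • x ≤ c • y := by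
  have := rsmul_nonneg hc (sub_nonneg.mpr h)
  rw [smul_sub, sub_nonneg] at this
  exact this

lemma rsmul_le_rsmul_right {c d : ℝ} (h : c ≤ d) {x : E} (hx : 0 ≤ x) : c • x ≤ d • x := by
  have := rsmul_nonneg (sub_nonneg.mpr h) hx
  rw [sub_smul, sub_nonneg] at this
  exact this

lemma rsmul_sup {c : ℝ} (hc : 0 ≤ c) (a b : E) : c • (a ⊔ b) = (c • a) ⊔ (c • b) := by
  rcases eq_or_lt_of_le hc with rfl | hpos
  · simp
  have hle : ∀ (d : ℝ), 0 ≤ d → ∀ u v : E, (d • u) ⊔ (d • v) ≤ d • (u ⊔ v) := fun d hd u v =>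
    sup_le (rsmul_le_rsmul hd le_sup_left) (rsmul_le_rsmul hd le_sup_right)
  refine le_antisymm ?_ (hle c hc a b)
  have h2 := hle c⁻¹ (by positivity) (c • a) (c • b)
  have h3 : c⁻¹ • (c • a) = a := by rw [smul_smul, inv_mul_cancel₀ hpos.ne', one_smul]
  have h4 : c⁻¹ • (c • b) = b := by rw [smul_smul, inv_mul_cancel₀ hpos.ne', one_smul]
  rw [h3, h4] at h2
  have h5 := rsmul_le_rsmul hc h2
  rw [smul_smul, mul_inv_cancel₀ hpos.ne', one_smul] at h5
  exact h5

lemma rsmul_posPart {c : ℝ} (hc : 0 ≤ c) (a : E) : (c • a)⁺ = c • a⁺ := by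
  have : a⁺ = a ⊔ 0 := rfl
  rw [this, rsmul_sup hc, smul_zero]
  rfl

lemma rsmul_abs {c : ℝ} (hc : 0 ≤ c) (a : E) : |c • a| = c • |a| := by
  have h1 : |c • a| = (c • a) ⊔ (-(c • a)) := rfl
  have h2 : |a| = a ⊔ -a := rfl
  rw [h1, h2, rsmul_sup hc, smul_neg]

/-- The key disjointness computation. -/
lemma key_disj {a X : E} (ha : 0 ≤ a) (hX : 0 ≤ X) {t β K : ℝ} (ht : 0 ≤ t) (hK : 1 ≤ K)
    (hcond : β ≤ K * t) : (a - t • X)⁺ ⊓ (β • X - K • a)⁺ = 0 := by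
  set p := (a - t • X)⁺ with hp
  set q := (β • X - K • a)⁺ with hq
  have hp0 : 0 ≤ p := posPart_nonneg _
  have hq0 : 0 ≤ q := posPart_nonneg _
  refine le_antisymm ?_ (le_inf hp0 hq0)
  have h1 : p ≤ K • p := by
    have := rsmul_le_rsmul_right hK hp0
    rwa [one_smul] at this
  have h2 : K • p = (K • a - (K*t) • X)⁺ := by
    rw [hp, ← rsmul_posPart (by linarith : (0:ℝ) ≤ K), smul_sub, smul_smul]
  have h3 : K • p ≤ (K • a - β • X)⁺ := by
    rw [h2]
    exact posPart_mono' (sub_le_sub_left (rsmul_le_rsmul_right hcond hX) _)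
  have h4 : (K • a - β • X)⁺ ⊓ q = 0 := by
    have : q = (K • a - β • X)⁻ := by
      rw [hq]
      have : β • X - K • a = -(K • a - β • X) := by abel
      rw [this]
      rfl
    rw [this]
    exact posPart_inf_negPart_eq_zero _
  calc p ⊓ q ≤ (K • a - β • X)⁺ ⊓ q := inf_le_inf_right q (le_trans h1 h3)
  _ = 0 := h4


end LatticeAux


section DualAbsTk

variable {E : Type*} [NormedAddCommGroup E] [Lattice E] [HasSolidNorm E] [IsOrderedAddMonoid E] [NormedSpace ℝ E]

lemma dualAbs_bddAbove (f : E →L[ℝ] ℝ) {x : E} (hx : 0 ≤ x) :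
    BddAbove ((fun y => f y) '' {y : E | |y| ≤ x}) := by
  refine ⟨‖f‖ * ‖x‖, ?_⟩
  rintro - ⟨y, hy, rfl⟩
  have h1 : ‖y‖ ≤ ‖x‖ := by
    have : |y| ≤ |x| := by rwa [abs_of_nonneg hx]
    exact norm_le_norm_of_abs_le_abs this
  calc f y ≤ |f y| := le_abs_self _
  _ ≤ ‖f‖ * ‖y‖ := f.le_opNorm y
  _ ≤ ‖f‖ * ‖x‖ := by nlinarith [norm_nonneg f]

lemma dualAbs_mem_nonempty (f : E →L[ℝ] ℝ) {x : E} (hx : 0 ≤ x) :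
    ((fun y => f y) '' {y : E | |y| ≤ x}).Nonempty :=
  ⟨f 0, ⟨0, by simpa using hx, rfl⟩⟩

lemma le_dualAbs (f : E →L[ℝ] ℝ) {x y : E} (hx : 0 ≤ x) (hy : |y| ≤ x) :
    f y ≤ dualAbs f x :=
  le_csSup (dualAbs_bddAbove f hx) ⟨y, hy, rfl⟩

lemma abs_le_dualAbs (f : E →L[ℝ] ℝ) {x y : E} (hx : 0 ≤ x) (hy : |y| ≤ x) :
    |f y| ≤ dualAbs f x := by
  rw [abs_le]
  refine ⟨?_, le_dualAbs f hx hy⟩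
  have := le_dualAbs f hx (y := -y) (by rwa [abs_neg])
  rw [map_neg] at this
  linarith

lemma dualAbs_nonneg (f : E →L[ℝ] ℝ) {x : E} (hx : 0 ≤ x) : 0 ≤ dualAbs f x := by
  have := le_dualAbs f hx (y := 0) (by simpa using hx)
  simpa using this

lemma dualAbs_zero (f : E →L[ℝ] ℝ) : dualAbs f 0 = 0 := by
  have h1 : {y : E | |y| ≤ 0} = {0} := by
    ext y
    simp only [Set.mem_setOf_eq, Set.mem_singleton_iff]
    constructor
    · intro h
      have habs : y ⊔ -y ≤ 0 := h
      have h3 : y ≤ 0 := le_trans le_sup_left habs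
      have h4 : -y ≤ 0 := le_trans le_sup_right habs
      exact le_antisymm h3 (by simpa using h4)
    · rintro rfl; simp
  rw [dualAbs, h1]
  simp

lemma dualAbs_le_norm (f : E →L[ℝ] ℝ) {x : E} (hx : 0 ≤ x) :
    dualAbs f x ≤ ‖f‖ * ‖x‖ := by
  refine csSup_le (dualAbs_mem_nonempty f hx) ?_
  rintro - ⟨y, hy, rfl⟩
  have h1 : ‖y‖ ≤ ‖x‖ := norm_le_norm_of_abs_le_abs (by rw [abs_of_nonneg hx]; exact hy)
  calc f y ≤ |f y| := le_abs_self _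
  _ ≤ ‖f‖ * ‖y‖ := f.le_opNorm y
  _ ≤ ‖f‖ * ‖x‖ := by nlinarith [norm_nonneg f]

lemma dualAbs_mono (f : E →L[ℝ] ℝ) {x x' : E} (hx : 0 ≤ x) (h : x ≤ x') :
    dualAbs f x ≤ dualAbs f x' :=
  csSup_le_csSup (dualAbs_bddAbove f (le_trans hx h))
    (dualAbs_mem_nonempty f hx)
    (Set.image_mono fun y hy => le_trans hy h)

/-- Riesz decomposition: if `|y| ≤ a + b` then `y` splits into parts dominated by `a` and `b`. -/
lemma riesz_decomp {y a b : E} (ha : 0 ≤ a) (hb : 0 ≤ b) (h : |y| ≤ a + b) :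
    ∃ p q : E, y = p + q ∧ |p| ≤ a ∧ |q| ≤ b := by
  have habs : y ⊔ -y ≤ a + b := h
  have hyu : y ≤ a + b := le_trans le_sup_left habs
  have hyl : -(a + b) ≤ y := by
    have h5 : -y ≤ a + b := le_trans le_sup_right habs
    exact neg_le.mp h5
  refine ⟨(y ⊓ a) ⊔ (-a), y - ((y ⊓ a) ⊔ (-a)), by abel, ?_, ?_⟩
  · rw [abs_le']
    constructor
    · exact sup_le (le_trans inf_le_right le_rfl) (neg_le_self ha)
    · rw [neg_le]
      exact le_sup_right
  · have hkey : y - ((y ⊓ a) ⊔ (-a)) = (y - y ⊓ a) ⊓ (y + a) := by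
      rw [sub_sup, sub_neg_eq_add]
    have h2 : y - y ⊓ a = (y - a)⁺ := by
      rw [sub_inf, sub_self, sup_comm]
      rfl
    rw [abs_le']
    constructor
    · rw [hkey, h2]
      refine le_trans inf_le_left ?_
      refine le_trans (posPart_mono' (sub_le_sub_right hyu a)) ?_
      have h3 : a + b - a = b := by abel
      rw [h3]
      exact le_of_eq (posPart_eq_self.mpr hb)
    · rw [neg_le, hkey]
      refine le_inf ?_ ?_
      · exact le_trans (neg_nonpos.mpr hb) (h2 ▸ posPart_nonneg _)
      · have h6 : -b - a ≤ y := by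
          have h7 : -b - a = -(a+b) := by abel
          rw [h7]; exact hyl
        exact sub_le_iff_le_add.mp h6

lemma dualAbs_subadd (f : E →L[ℝ] ℝ) {a b : E} (ha : 0 ≤ a) (hb : 0 ≤ b) :
    dualAbs f (a + b) ≤ dualAbs f a + dualAbs f b := by
  refine csSup_le (dualAbs_mem_nonempty f (add_nonneg ha hb)) ?_
  rintro - ⟨y, hy, rfl⟩
  obtain ⟨p, q, rfl, hp, hq⟩ := riesz_decomp ha hb hy
  show f (p + q) ≤ _
  rw [map_add]
  exact add_le_add (le_dualAbs f ha hp) (le_dualAbs f hb hq)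

lemma dualAbs_superadd (f : E →L[ℝ] ℝ) {a b : E} (ha : 0 ≤ a) (hb : 0 ≤ b) :
    dualAbs f a + dualAbs f b ≤ dualAbs f (a + b) := by
  have hab : 0 ≤ a + b := add_nonneg ha hb
  have step1 : ∀ p : E, |p| ≤ a → f p + dualAbs f b ≤ dualAbs f (a + b) := by
    intro p hp
    have : dualAbs f b ≤ dualAbs f (a + b) - f p := by
      refine csSup_le (dualAbs_mem_nonempty f hb) ?_
      rintro - ⟨q, hq, rfl⟩
      show f q ≤ _
      rw [le_sub_iff_add_le, add_comm]
      have habs : |p + q| ≤ a + b := by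
        have htri : |p + q| ≤ |p| + |q| := abs_add_le p q
        exact le_trans htri (add_le_add hp hq)
      have := le_dualAbs f hab habs
      rwa [map_add] at this
    linarith
  have : dualAbs f a ≤ dualAbs f (a + b) - dualAbs f b := by
    refine csSup_le (dualAbs_mem_nonempty f ha) ?_
    rintro - ⟨p, hp, rfl⟩
    rw [le_sub_iff_add_le]
    exact step1 p hp
  linarith

lemma dualAbs_add (f : E →L[ℝ] ℝ) {a b : E} (ha : 0 ≤ a) (hb : 0 ≤ b) :
    dualAbs f (a + b) = dualAbs f a + dualAbs f b :=
  le_antisymm (dualAbs_subadd f ha hb) (dualAbs_superadd f ha hb)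

lemma dualAbs_finsum (f : E →L[ℝ] ℝ) {ι : Type*} (S : Finset ι) (p : ι → E)
    (hp : ∀ i ∈ S, 0 ≤ p i) :
    dualAbs f (∑ i ∈ S, p i) = ∑ i ∈ S, dualAbs f (p i) := by
  induction S using Finset.cons_induction_on with
  | empty => simpa using dualAbs_zero f
  | @cons a S' hnot ih =>
      rw [Finset.sum_cons, Finset.sum_cons,
        dualAbs_add f (hp a (Finset.mem_cons_self a S'))
          (Finset.sum_nonneg fun i hi => hp i (Finset.mem_cons_of_mem hi)),
        ih (fun i hi => hp i (Finset.mem_cons_of_mem hi))]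

lemma exists_witness_of_lt_dualAbs (f : E →L[ℝ] ℝ) {x : E} (hx : 0 ≤ x) {c : ℝ}
    (h : c < dualAbs f x) : ∃ y : E, |y| ≤ x ∧ c < f y := by
  obtain ⟨-, ⟨y, hy, rfl⟩, hlt⟩ := exists_lt_of_lt_csSup (dualAbs_mem_nonempty f hx) h
  exact ⟨y, hy, hlt⟩

end DualAbsTk


section WkBdd

variable {X : Type*} [NormedAddCommGroup X] [NormedSpace ℝ X]

lemma weaklyNull_bounded {w : ℕ → X} (hw : WeaklyNull w) :
    ∃ C : ℝ, 0 ≤ C ∧ ∀ j, ‖w j‖ ≤ C := by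
  have hpt : ∀ h : StrongDual ℝ X, ∃ C, ∀ j,
      ‖(NormedSpace.inclusionInDoubleDual ℝ X (w j)) h‖ ≤ C := by
    intro h
    have h1 : Tendsto (fun j => ‖h (w j)‖) atTop (𝓝 ‖(0:ℝ)‖) := (hw h).norm
    obtain ⟨C, hC⟩ := h1.bddAbove_range
    refine ⟨C, fun j => ?_⟩
    have : ‖h (w j)‖ ∈ Set.range fun j => ‖h (w j)‖ := ⟨j, rfl⟩
    simpa [NormedSpace.inclusionInDoubleDual] using hC this
  obtain ⟨C, hC⟩ := banach_steinhaus hpt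
  refine ⟨max C 0, le_max_right _ _, fun j => ?_⟩
  have h2 : ‖NormedSpace.inclusionInDoubleDual ℝ X (w j)‖ = ‖w j‖ :=
    (NormedSpace.inclusionInDoubleDualLi ℝ (E := X)).norm_map (w j)
  rw [← h2]
  exact le_trans (hC j) (le_max_left _ _)

lemma weaklyNull_comp {w : ℕ → X} (hw : WeaklyNull w) {t : ℕ → ℕ}
    (ht : Tendsto t atTop atTop) : WeaklyNull (fun j => w (t j)) :=
  fun h => (hw h).comp ht

lemma weaklyNull_comp_inj {w : ℕ → X} (hw : WeaklyNull w) {t : ℕ → ℕ}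
    (ht : Function.Injective t) : WeaklyNull (fun j => w (t j)) :=
  weaklyNull_comp hw (by
    rw [← Nat.cofinite_eq_atTop]
    exact ht.tendsto_cofinite)

end WkBdd

section ConeExt

variable {E : Type*} [NormedAddCommGroup E] [Lattice E] [HasSolidNorm E] [IsOrderedAddMonoid E] [NormedSpace ℝ E]

/-- Extension of an additive functional on the positive cone to a continuous linear functional. -/
lemma cone_extension (q : E → ℝ) (K : ℝ)
    (hadd : ∀ a b : E, 0 ≤ a → 0 ≤ b → q (a + b) = q a + q b)
    (hbd : ∀ a : E, 0 ≤ a → |q a| ≤ K * ‖a‖) :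
    ∃ Q : E →L[ℝ] ℝ, ∀ x : E, Q x = q (x⁺) - q (x⁻) := by
  have hq0 : q 0 = 0 := by
    have := hadd 0 0 le_rfl le_rfl
    simp at this
    linarith
  -- the candidate map
  set F : E → ℝ := fun x => q (x⁺) - q (x⁻) with hF
  have hFadd : ∀ x y : E, F (x + y) = F x + F y := by
    intro x y
    have p1 : (x+y)⁺ = (x + y) + (x+y)⁻ := eq_add_of_sub_eq (posPart_sub_negPart _)
    have p2 : x⁺ = x + x⁻ := eq_add_of_sub_eq (posPart_sub_negPart _)
    have p3 : y⁺ = y + y⁻ := eq_add_of_sub_eq (posPart_sub_negPart _)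
    have hiden : (x+y)⁺ + x⁻ + y⁻ = (x+y)⁻ + x⁺ + y⁺ := by
      rw [p1, p2, p3]; abel
    have hqiden : q ((x+y)⁺) + q (x⁻) + q (y⁻) = q ((x+y)⁻) + q (x⁺) + q (y⁺) := by
      have l1 : q (((x+y)⁺ + x⁻) + y⁻) = q ((x+y)⁺) + q (x⁻) + q (y⁻) := by
        rw [hadd _ _ (add_nonneg (posPart_nonneg _) (negPart_nonneg _)) (negPart_nonneg _),
          hadd _ _ (posPart_nonneg _) (negPart_nonneg _)]
      have l2 : q (((x+y)⁻ + x⁺) + y⁺) = q ((x+y)⁻) + q (x⁺) + q (y⁺) := by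
        rw [hadd _ _ (add_nonneg (negPart_nonneg _) (posPart_nonneg _)) (posPart_nonneg _),
          hadd _ _ (negPart_nonneg _) (posPart_nonneg _)]
      rw [← l1, ← l2, hiden]
    simp only [hF]
    linarith
  have hFbd : ∀ x : E, |F x| ≤ 2 * (|K| + 1) * ‖x‖ := by
    intro x
    have b1 : |q (x⁺)| ≤ K * ‖x⁺‖ := hbd _ (posPart_nonneg _)
    have b2 : |q (x⁻)| ≤ K * ‖x⁻‖ := hbd _ (negPart_nonneg _)
    have n1 : ‖x⁺‖ ≤ ‖x‖ := by
      refine norm_le_norm_of_abs_le_abs ?_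
      rw [abs_of_nonneg (posPart_nonneg _)]
      calc x⁺ ≤ x⁺ + x⁻ := le_add_of_nonneg_right (negPart_nonneg _)
      _ = |x| := posPart_add_negPart x
    have n2 : ‖x⁻‖ ≤ ‖x‖ := by
      refine norm_le_norm_of_abs_le_abs ?_
      rw [abs_of_nonneg (negPart_nonneg _)]
      calc x⁻ ≤ x⁺ + x⁻ := le_add_of_nonneg_left (posPart_nonneg _)
      _ = |x| := posPart_add_negPart x
    have hK : K ≤ |K| := le_abs_self K
    have hn : 0 ≤ ‖x‖ := norm_nonneg x
    have hb1 : |q (x⁺)| ≤ |K| * ‖x⁺‖ :=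
      le_trans b1 (mul_le_mul_of_nonneg_right hK (norm_nonneg _))
    have hb2 : |q (x⁻)| ≤ |K| * ‖x⁻‖ :=
      le_trans b2 (mul_le_mul_of_nonneg_right hK (norm_nonneg _))
    have htri : |q (x⁺) - q (x⁻)| ≤ |q (x⁺)| + |q (x⁻)| := abs_sub _ _
    show |q (x⁺) - q (x⁻)| ≤ _
    have hKnn : (0:ℝ) ≤ |K| := abs_nonneg K
    nlinarith
  -- build the AddMonoidHom and upgrade
  have hF0 : F 0 = 0 := by simp [hF, hq0]
  set Fh : E →+ ℝ := AddMonoidHom.mk' F hFadd with hFh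
  have hcont : Continuous F := by
    have hlip : LipschitzWith (Real.toNNReal (2 * (|K| + 1))) F := by
      refine LipschitzWith.of_dist_le_mul fun x y => ?_
      have := hFbd (x - y)
      have hsub : F (x - y) = F x - F y := by
        have := hFadd (x - y) y
        simp only [sub_add_cancel] at this
        linarith
      rw [dist_eq_norm, dist_eq_norm, ← hsub]
      rw [Real.norm_eq_abs]
      refine le_trans this ?_
      have h9 : (0:ℝ) ≤ 2 * (|K| + 1) := by positivity
      rw [Real.coe_toNNReal _ h9]
    exact hlip.continuous
  set QL := Fh.toRealLinearMap hcont with hQL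
  exact ⟨QL, fun x => congrFun (Fh.coe_toRealLinearMap hcont) x⟩

end ConeExt


section MatrixLemma

lemma fin_of_sumbound (g : ℕ → ℝ) (M : ℝ) (hg : ∀ i, 0 ≤ g i)
    (hbd : ∀ S : Finset ℕ, ∑ i ∈ S, g i ≤ M) {δ : ℝ} (hδ : 0 < δ) :
    {i : ℕ | δ ≤ g i}.Finite := by
  by_contra hinf
  have hinf' : {i : ℕ | δ ≤ g i}.Infinite := hinf
  obtain ⟨S, hSsub, hScard⟩ := hinf'.exists_subset_card_eq (⌈M/δ⌉₊ + 1)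
  have h1 : (S.card : ℝ) * δ ≤ ∑ i ∈ S, g i := by
    calc (S.card : ℝ) * δ = ∑ _i ∈ S, δ := by rw [Finset.sum_const, nsmul_eq_mul]
    _ ≤ ∑ i ∈ S, g i := Finset.sum_le_sum fun i hi => hSsub hi
  have h2 : (S.card : ℝ) * δ ≤ M := le_trans h1 (hbd S)
  rw [hScard] at h2
  have h3 : M/δ < (⌈M/δ⌉₊ + 1 : ℕ) := by
    push_cast
    exact lt_of_le_of_lt (Nat.le_ceil _) (by linarith)
  rw [div_lt_iff₀ hδ] at h3
  push_cast at h2 h3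
  linarith

lemma matrix_extract (a : ℕ → ℕ → ℝ) (M : ℝ) (ha : ∀ j i, 0 ≤ a j i)
    (hrow : ∀ j (S : Finset ℕ), ∑ i ∈ S, a j i ≤ M) {ε : ℝ} (hε : 0 < ε) :
    ∃ t : ℕ → ℕ, StrictMono t ∧
      ∀ j (S : Finset ℕ), ∑ l ∈ S.erase j, a (t j) (t l) ≤ ε := by
  classical
  set U : Ultrafilter ℕ := Ultrafilter.of atTop with hUdef
  have hU : (U : Filter ℕ) ≤ atTop := Ultrafilter.of_le _
  have hUcof : ∀ s : Set ℕ, sᶜ.Finite → s ∈ U := by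
    intro s hs
    have h1 : s ∈ Filter.cofinite := by
      rw [Filter.mem_cofinite]; exact hs
    rw [Nat.cofinite_eq_atTop] at h1
    exact hU h1
  -- ultrafilter limits of columns
  have hc : ∀ i, ∃ cv : ℝ, 0 ≤ cv ∧ Tendsto (fun j => a j i) (U : Filter ℕ) (𝓝 cv) := by
    intro i
    have hcpt : IsCompact (Set.Icc (0:ℝ) M) := isCompact_Icc
    have hmap : (U.map (fun j => a j i) : Filter ℝ) ≤ Filter.principal (Set.Icc 0 M) := by
      rw [Filter.le_principal_iff]
      refine Filter.mem_map.mpr ?_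
      have : ∀ j, a j i ∈ Set.Icc (0:ℝ) M := fun j => ⟨ha j i, by simpa using hrow j {i}⟩
      exact Filter.Eventually.of_forall this
    obtain ⟨cv, hcvmem, hle⟩ := hcpt.ultrafilter_le_nhds (U.map (fun j => a j i)) hmap
    exact ⟨cv, hcvmem.1, hle⟩
  choose c hc0 hctend using hc
  have hcsum : ∀ S : Finset ℕ, ∑ i ∈ S, c i ≤ M := by
    intro S
    have h1 : Tendsto (fun j => ∑ i ∈ S, a j i) (U : Filter ℕ) (𝓝 (∑ i ∈ S, c i)) :=
      tendsto_finset_sum S (fun i _ => hctend i)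
    exact le_of_tendsto h1 (Filter.Eventually.of_forall fun j => hrow j S)
  -- the three families of good sets
  have hGoodc : ∀ θ : ℝ, 0 < θ → {m : ℕ | c m ≤ θ} ∈ U := by
    intro θ hθ
    refine hUcof _ (Set.Finite.subset (fin_of_sumbound c M hc0 hcsum hθ) ?_)
    intro m hm
    simp only [Set.mem_compl_iff, Set.mem_setOf_eq, not_le] at hm
    exact le_of_lt hm
  have hGoodrow : ∀ (i₀ : ℕ) (θ : ℝ), 0 < θ → {m : ℕ | a i₀ m ≤ θ} ∈ U := by
    intro i₀ θ hθ
    refine hUcof _ (Set.Finite.subset (fin_of_sumbound (a i₀) M (ha i₀) (hrow i₀) hθ) ?_)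
    intro m hm
    simp only [Set.mem_compl_iff, Set.mem_setOf_eq, not_le] at hm
    exact le_of_lt hm
  have hGoodcol : ∀ (i₀ : ℕ) (θ : ℝ), 0 < θ → {m : ℕ | a m i₀ ≤ c i₀ + θ} ∈ U := by
    intro i₀ θ hθ
    have h1 : ∀ᶠ v in 𝓝 (c i₀), v < c i₀ + θ := gt_mem_nhds (by linarith)
    have h2 := (hctend i₀).eventually h1
    exact h2.mono fun m hm => le_of_lt hm
  -- the recursion
  set Good : ℕ → (ℕ → ℕ) → ℕ → Prop := fun j s m =>
    (∀ l, l < j → (s l < m ∧ a m (s l) ≤ c (s l) + ε/2^(l+3) ∧ a (s l) m ≤ ε/2^(j+3))) ∧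
      c m ≤ ε/2^(j+3) with hGood
  have hstep : ∀ j (s : ℕ → ℕ), ∃ s' : ℕ → ℕ,
      s' = Function.update s j (s' j) ∧ Good j s (s' j) := by
    intro j s
    have hev : ∀ᶠ m in (U : Filter ℕ), Good j s m := by
      have hpart1 : ∀ᶠ m in (U : Filter ℕ), ∀ l ∈ Finset.range j,
          (s l < m ∧ a m (s l) ≤ c (s l) + ε/2^(l+3) ∧ a (s l) m ≤ ε/2^(j+3)) := by
        rw [Filter.eventually_all_finset]
        intro l hl
        have e1 : {m : ℕ | s l < m} ∈ U := by
          refine hUcof _ (Set.Finite.subset (Set.finite_Iic (s l)) ?_)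
          intro m hm
          simp only [Set.mem_compl_iff, Set.mem_setOf_eq, not_lt] at hm
          exact hm
        have e2 := hGoodcol (s l) (ε/2^(l+3)) (by positivity)
        have e3 := hGoodrow (s l) (ε/2^(j+3)) (by positivity)
        filter_upwards [e1, e2, e3] with m h1 h2 h3
        exact ⟨h1, h2, h3⟩
      have hpart2 := hGoodc (ε/2^(j+3)) (by positivity)
      filter_upwards [hpart1, hpart2] with m h1 h2
      refine ⟨fun l hl => h1 l (Finset.mem_range.mpr hl), h2⟩
    obtain ⟨m, hm⟩ := hev.exists
    exact ⟨Function.update s j m, by rw [Function.update_self], by rw [Function.update_self]; exact hm⟩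
  obtain ⟨F, hF0, hFstep⟩ := exists_rec_aux (fun _ => 0) _ hstep
  set t : ℕ → ℕ := fun j => F (j+1) j with ht
  -- stability
  have hstab : ∀ k l, l < k → F k l = F (l+1) l := by
    intro k
    induction k with
    | zero => intro l hl; omega
    | succ k ih =>
        intro l hl
        rcases Nat.lt_or_ge l k with h | h
        · have h2 : F (k+1) = Function.update (F k) k (F (k+1) k) := (hFstep k).1
          rw [h2, Function.update_of_ne (by omega : l ≠ k)]
          exact ih l h
        · have hlk : l = k := by omega
          subst hlk
          rfl
  have htval : ∀ k l, l < k → F k l = t l := fun k l hl => hstab k l hl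
  have hGoodt : ∀ j, Good j (F j) (t j) := fun j => (hFstep j).2
  have hmono : StrictMono t := by
    refine strictMono_nat_of_lt_succ fun j => ?_
    have := ((hGoodt (j+1)).1 j (by omega)).1
    rwa [htval (j+1) j (by omega)] at this
  refine ⟨t, hmono, ?_⟩
  intro j S
  have hkey : ∀ l : ℕ, ε/2^(l+3) ≤ (ε/4) * (1/2:ℝ)^l := by
    intro l
    have hp : (0:ℝ) < 2^l := by positivity
    have e1 : (ε/4)*(1/2:ℝ)^l = ε/(4 * 2^l) := by
      rw [one_div, inv_pow]
      field_simp
    have e2 : ε/2^(l+3) = ε/(8 * 2^l) := by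
      rw [pow_add]
      norm_num
      ring_nf
    rw [e1, e2]
    gcongr
    all_goals first | positivity | norm_num | linarith
  have hterm : ∀ l ∈ S.erase j, a (t j) (t l) ≤ (ε/2) * (1/2)^l := by
    intro l hl
    have hlj : l ≠ j := Finset.ne_of_mem_erase hl
    have hhalf : (0:ℝ) ≤ (1/2:ℝ)^l := by positivity
    have hsplit : (ε/4) * (1/2:ℝ)^l + (ε/4) * (1/2:ℝ)^l = (ε/2) * (1/2:ℝ)^l := by ring
    rcases Nat.lt_or_ge l j with h | h
    · have h1 := (hGoodt j).1 l h
      rw [htval j l h] at h1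
      have h2 : c (t l) ≤ ε/2^(l+3) := (hGoodt l).2
      have h3 : a (t j) (t l) ≤ c (t l) + ε/2^(l+3) := h1.2.1
      have h5 : a (t j) (t l) ≤ ε/2^(l+3) + ε/2^(l+3) := by linarith
      have h6 := hkey l
      linarith
    · have hjl : j < l := lt_of_le_of_ne h (Ne.symm hlj)
      have h1 := (hGoodt l).1 j hjl
      rw [htval l j hjl] at h1
      have h3 : a (t j) (t l) ≤ ε/2^(l+3) := h1.2.2
      have h6 := hkey l
      have h7 : (0:ℝ) ≤ (ε/4) * (1/2:ℝ)^l := by positivity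
      linarith
  have hsum : ∑ l ∈ S.erase j, a (t j) (t l) ≤ ∑ l ∈ S.erase j, (ε/2) * (1/2:ℝ)^l :=
    Finset.sum_le_sum hterm
  refine le_trans hsum ?_
  have hgeom : ∑ l ∈ S.erase j, (1/2:ℝ)^l ≤ 2 := by
    set T := S.erase j
    have hsub : T ⊆ Finset.range ((T.sup id) + 1) := by
      intro l hlT
      exact Finset.mem_range.mpr (Nat.lt_succ_of_le (Finset.le_sup (f := id) hlT))
    calc ∑ l ∈ T, (1/2:ℝ)^l ≤ ∑ l ∈ Finset.range ((T.sup id)+1), (1/2:ℝ)^l :=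
          Finset.sum_le_sum_of_subset_of_nonneg hsub (fun i _ _ => by positivity)
    _ ≤ 2 := sum_geometric_two_le _
  calc ∑ l ∈ S.erase j, (ε/2) * (1/2:ℝ)^l = (ε/2) * ∑ l ∈ S.erase j, (1/2:ℝ)^l := by
        rw [Finset.mul_sum]
  _ ≤ (ε/2) * 2 := by nlinarith
  _ = ε := by ring

end MatrixLemma


section QFun

variable {E : Type*} [NormedAddCommGroup E] [Lattice E] [HasSolidNorm E] [IsOrderedAddMonoid E] [NormedSpace ℝ E]

/-- Truncated component value. -/
noncomputable def Qseq (h : E →L[ℝ] ℝ) (z d x : E) (r : ℕ) : ℝ :=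
  dualAbs h (x ⊓ r • z ⊓ r • d)

/-- The component of `|h|` on the band generated by `z ⊓ d`-directions, evaluated at `x`. -/
noncomputable def Qfun (h : E →L[ℝ] ℝ) (z d x : E) : ℝ :=
  ⨆ r : ℕ, Qseq h z d x r

variable {h : E →L[ℝ] ℝ} {z d x y : E}

lemma Qarg_nonneg (hx : 0 ≤ x) (hz : 0 ≤ z) (hd : 0 ≤ d) (r : ℕ) :
    0 ≤ x ⊓ r • z ⊓ r • d :=
  le_inf (le_inf hx (nsmul_nonneg hz r)) (nsmul_nonneg hd r)

lemma Qarg_le (r : ℕ) : x ⊓ r • z ⊓ r • d ≤ x := le_trans inf_le_left inf_le_left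

lemma Qarg_mono (hx : 0 ≤ x) (hz : 0 ≤ z) (hd : 0 ≤ d) :
    Monotone (fun r : ℕ => x ⊓ r • z ⊓ r • d) := by
  intro r r' hr
  exact inf_le_inf (inf_le_inf le_rfl (nsmul_le_nsmul_left hz hr)) (nsmul_le_nsmul_left hd hr)

lemma Qseq_nonneg (hx : 0 ≤ x) (hz : 0 ≤ z) (hd : 0 ≤ d) (r : ℕ) :
    0 ≤ Qseq h z d x r :=
  dualAbs_nonneg h (Qarg_nonneg hx hz hd r)

lemma Qseq_le (hx : 0 ≤ x) (hz : 0 ≤ z) (hd : 0 ≤ d) (r : ℕ) :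
    Qseq h z d x r ≤ dualAbs h x :=
  dualAbs_mono h (Qarg_nonneg hx hz hd r) (Qarg_le r)

lemma Qseq_mono (hx : 0 ≤ x) (hz : 0 ≤ z) (hd : 0 ≤ d) :
    Monotone (Qseq h z d x) := fun r r' hr =>
  dualAbs_mono h (Qarg_nonneg hx hz hd r) (Qarg_mono hx hz hd hr)

lemma Qseq_bdd (hx : 0 ≤ x) (hz : 0 ≤ z) (hd : 0 ≤ d) :
    BddAbove (Set.range (Qseq h z d x)) :=
  ⟨dualAbs h x, by rintro - ⟨r, rfl⟩; exact Qseq_le hx hz hd r⟩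

lemma Qfun_tendsto (hx : 0 ≤ x) (hz : 0 ≤ z) (hd : 0 ≤ d) :
    Tendsto (Qseq h z d x) atTop (𝓝 (Qfun h z d x)) :=
  tendsto_atTop_ciSup (Qseq_mono hx hz hd) (Qseq_bdd hx hz hd)

lemma Qseq_le_Qfun (hx : 0 ≤ x) (hz : 0 ≤ z) (hd : 0 ≤ d) (r : ℕ) :
    Qseq h z d x r ≤ Qfun h z d x :=
  le_ciSup (Qseq_bdd hx hz hd) r

lemma Qfun_nonneg (hx : 0 ≤ x) (hz : 0 ≤ z) (hd : 0 ≤ d) : 0 ≤ Qfun h z d x :=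
  le_trans (Qseq_nonneg hx hz hd 0) (Qseq_le_Qfun hx hz hd 0)

lemma Qfun_le (hx : 0 ≤ x) (hz : 0 ≤ z) (hd : 0 ≤ d) : Qfun h z d x ≤ dualAbs h x :=
  ciSup_le fun r => Qseq_le hx hz hd r

/-- Vanishing of the component when the argument is disjoint from the cap `d`. -/
lemma Qfun_eq_zero (hx : 0 ≤ x) (hz : 0 ≤ z) (hd : 0 ≤ d) (hxd : x ⊓ d = 0) :
    Qfun h z d x = 0 := by
  have hterm : ∀ r, Qseq h z d x r = 0 := by
    intro r
    have h1 : x ⊓ r • d = 0 := by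
      rw [inf_comm]
      exact disj_nsmul r hd hx (by rw [inf_comm]; exact hxd)
    have h2 : x ⊓ r • z ⊓ r • d ≤ x ⊓ r • d :=
      inf_le_inf inf_le_left le_rfl
    have h3 : x ⊓ r • z ⊓ r • d = 0 :=
      le_antisymm (h1 ▸ h2) (Qarg_nonneg hx hz hd r)
    rw [Qseq, h3, dualAbs_zero]
  rw [Qfun]
  simp [hterm]

/-- Additivity of the component on the positive cone. -/
lemma Qfun_add (hx : 0 ≤ x) (hy : 0 ≤ y) (hz : 0 ≤ z) (hd : 0 ≤ d) :
    Qfun h z d (x + y) = Qfun h z d x + Qfun h z d y := by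
  have hxy : 0 ≤ x + y := add_nonneg hx hy
  refine le_antisymm ?_ ?_
  · refine ciSup_le fun r => ?_
    have hC : (0:E) ≤ r • z ⊓ r • d := le_inf (nsmul_nonneg hz r) (nsmul_nonneg hd r)
    have e1 : (x + y) ⊓ r • z ⊓ r • d = (x + y) ⊓ (r • z ⊓ r • d) := inf_assoc _ _ _
    have e2 : x ⊓ r • z ⊓ r • d = x ⊓ (r • z ⊓ r • d) := inf_assoc _ _ _
    have e3 : y ⊓ r • z ⊓ r • d = y ⊓ (r • z ⊓ r • d) := inf_assoc _ _ _
    have hsplit : (x + y) ⊓ (r • z ⊓ r • d) ≤ x ⊓ (r • z ⊓ r • d) + y ⊓ (r • z ⊓ r • d) :=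
      inf_add_le_of_nonneg hx hy hC
    have hb : Qseq h z d (x+y) r ≤ Qseq h z d x r + Qseq h z d y r := by
      rw [Qseq, Qseq, Qseq, e1, e2, e3]
      calc dualAbs h ((x + y) ⊓ (r • z ⊓ r • d))
          ≤ dualAbs h (x ⊓ (r • z ⊓ r • d) + y ⊓ (r • z ⊓ r • d)) :=
            dualAbs_mono h (le_inf hxy hC) hsplit
      _ = _ := dualAbs_add h (le_inf hx hC) (le_inf hy hC)
    exact le_trans hb (add_le_add (Qseq_le_Qfun hx hz hd r) (Qseq_le_Qfun hy hz hd r))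
  · have htd : Tendsto (fun r => Qseq h z d x r + Qseq h z d y r) atTop
        (𝓝 (Qfun h z d x + Qfun h z d y)) :=
      (Qfun_tendsto hx hz hd).add (Qfun_tendsto hy hz hd)
    refine le_of_tendsto htd (Filter.Eventually.of_forall fun r => ?_)
    have hC : (0:E) ≤ r • z ⊓ r • d := le_inf (nsmul_nonneg hz r) (nsmul_nonneg hd r)
    have e2 : x ⊓ r • z ⊓ r • d = x ⊓ (r • z ⊓ r • d) := inf_assoc _ _ _
    have e3 : y ⊓ r • z ⊓ r • d = y ⊓ (r • z ⊓ r • d) := inf_assoc _ _ _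
    have hCC : (r • z ⊓ r • d) + (r • z ⊓ r • d) ≤ (2*r) • z ⊓ (2*r) • d := by
      have hzz : (r • z ⊓ r • d) + (r • z ⊓ r • d) ≤ (2*r) • z := by
        rw [two_mul, add_nsmul]
        exact add_le_add inf_le_left inf_le_left
      have hdd : (r • z ⊓ r • d) + (r • z ⊓ r • d) ≤ (2*r) • d := by
        rw [two_mul, add_nsmul]
        exact add_le_add inf_le_right inf_le_right
      exact le_inf hzz hdd
    have hsum : x ⊓ (r • z ⊓ r • d) + y ⊓ (r • z ⊓ r • d) ≤ (x + y) ⊓ ((2*r) • z ⊓ (2*r) • d) := by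
      refine le_inf (add_le_add inf_le_left inf_le_left) ?_
      exact le_trans (add_le_add inf_le_right inf_le_right) hCC
    have hq : Qseq h z d x r + Qseq h z d y r ≤ Qseq h z d (x+y) (2*r) := by
      rw [Qseq, Qseq, Qseq, e2, e3, ← dualAbs_add h (le_inf hx hC) (le_inf hy hC)]
      calc dualAbs h (x ⊓ (r • z ⊓ r • d) + y ⊓ (r • z ⊓ r • d))
          ≤ dualAbs h ((x + y) ⊓ ((2*r) • z ⊓ (2*r) • d)) :=
            dualAbs_mono h (add_nonneg (le_inf hx hC) (le_inf hy hC)) hsum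
      _ = dualAbs h ((x + y) ⊓ (2*r) • z ⊓ (2*r) • d) := by rw [inf_assoc]
    exact le_trans hq (Qseq_le_Qfun hxy hz hd (2*r))

end QFun


section FamilyBound

variable {E : Type*} [NormedAddCommGroup E] [Lattice E] [HasSolidNorm E] [IsOrderedAddMonoid E] [NormedSpace ℝ E]

/-- Disjoint components of `|h|` sum to at most `|h|`. -/
lemma sum_AB_le (h : E →L[ℝ] ℝ) (S : Finset ℕ) (z w : ℕ → E) {v : E} (hv : 0 ≤ v)
    (hz0 : ∀ i, 0 ≤ z i) (hzd : ∀ i j, i ≠ j → z i ⊓ z j = 0) :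
    ∑ i ∈ S, (Qfun h (z i) ((w i)⁺) v + Qfun h (z i) ((w i)⁻) v) ≤ dualAbs h v := by
  have htend : Tendsto (fun r : ℕ => ∑ i ∈ S,
      (Qseq h (z i) ((w i)⁺) v r + Qseq h (z i) ((w i)⁻) v r)) atTop
      (𝓝 (∑ i ∈ S, (Qfun h (z i) ((w i)⁺) v + Qfun h (z i) ((w i)⁻) v))) :=
    tendsto_finset_sum S fun i _ =>
      (Qfun_tendsto hv (hz0 i) (posPart_nonneg _)).add
        (Qfun_tendsto hv (hz0 i) (negPart_nonneg _))
  refine le_of_tendsto htend (Filter.Eventually.of_forall fun r => ?_)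
  set p : ℕ → E := fun i => v ⊓ r • z i ⊓ r • (w i)⁺ with hp
  set q : ℕ → E := fun i => v ⊓ r • z i ⊓ r • (w i)⁻ with hq
  have hp0 : ∀ i, 0 ≤ p i := fun i => Qarg_nonneg hv (hz0 i) (posPart_nonneg _) r
  have hq0 : ∀ i, 0 ≤ q i := fun i => Qarg_nonneg hv (hz0 i) (negPart_nonneg _) r
  have hpz : ∀ i, p i ≤ r • z i := fun i => le_trans inf_le_left inf_le_right
  have hqz : ∀ i, q i ≤ r • z i := fun i => le_trans inf_le_left inf_le_right
  have hpqd : ∀ i, p i ⊓ q i = 0 := by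
    intro i
    have h1 : (r • (w i)⁺) ⊓ (r • (w i)⁻) = 0 := by
      rw [inf_comm]
      refine disj_nsmul r (negPart_nonneg _) (nsmul_nonneg (posPart_nonneg _) r) ?_
      rw [inf_comm]
      exact disj_nsmul r (posPart_nonneg _) (negPart_nonneg _) (posPart_inf_negPart_eq_zero _)
    refine le_antisymm ?_ (le_inf (hp0 i) (hq0 i))
    calc p i ⊓ q i ≤ (r • (w i)⁺) ⊓ (r • (w i)⁻) := inf_le_inf inf_le_right inf_le_right
    _ = 0 := h1
  have hzz : ∀ i j, i ≠ j → (r • z i) ⊓ (r • z j) = 0 := by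
    intro i j hij
    rw [inf_comm]
    refine disj_nsmul r (hz0 j) (nsmul_nonneg (hz0 i) r) ?_
    rw [inf_comm]
    exact disj_nsmul r (hz0 i) (hz0 j) (hzd i j hij)
  -- the combined family
  set s : ℕ → E := fun i => p i + q i with hs
  have hs0 : ∀ i, 0 ≤ s i := fun i => add_nonneg (hp0 i) (hq0 i)
  have hsv : ∀ i, s i ≤ v := by
    intro i
    have hsum : p i + q i = p i ⊔ q i := by
      rw [← inf_add_sup (p i) (q i), hpqd i, zero_add]
    rw [hs]
    simp only
    rw [hsum]
    exact sup_le (le_trans inf_le_left inf_le_left) (le_trans inf_le_left inf_le_left)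
  have hsd : ∀ i j, i ≠ j → s i ⊓ s j = 0 := by
    intro i j hij
    refine le_antisymm ?_ (le_inf (hs0 i) (hs0 j))
    have h1 : s i ≤ (2*r) • z i := by
      rw [hs]; simp only
      rw [two_mul, add_nsmul]
      exact add_le_add (hpz i) (hqz i)
    have h2 : s j ≤ (2*r) • z j := by
      rw [hs]; simp only
      rw [two_mul, add_nsmul]
      exact add_le_add (hpz j) (hqz j)
    have h3 : ((2*r) • z i) ⊓ ((2*r) • z j) = 0 := by
      rw [inf_comm]
      refine disj_nsmul (2*r) (hz0 j) (nsmul_nonneg (hz0 i) _) ?_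
      rw [inf_comm]
      exact disj_nsmul (2*r) (hz0 i) (hz0 j) (hzd i j hij)
    calc s i ⊓ s j ≤ ((2*r) • z i) ⊓ ((2*r) • z j) := inf_le_inf h1 h2
    _ = 0 := h3
  have hstep : ∑ i ∈ S, (Qseq h (z i) ((w i)⁺) v r + Qseq h (z i) ((w i)⁻) v r)
      = ∑ i ∈ S, dualAbs h (s i) := by
    refine Finset.sum_congr rfl fun i _ => ?_
    rw [hs]
    simp only
    rw [dualAbs_add h (hp0 i) (hq0 i)]
    rfl
  rw [hstep, ← dualAbs_finsum h S s (fun i _ => hs0 i)]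
  refine dualAbs_mono h (Finset.sum_nonneg fun i _ => hs0 i) ?_
  exact sum_le_of_pairwise_disj S s hv (fun i _ => hs0 i) (fun i _ => hsv i)
    (fun i _ j _ hij => hsd i j hij)

end FamilyBound

section LemmaD

variable {E : Type*} [NormedAddCommGroup E] [Lattice E] [HasSolidNorm E] [IsOrderedAddMonoid E] [NormedSpace ℝ E]

/-- A disjoint sequence dominated by a weakly null sequence is weakly null. -/
lemma lemmaD {w y : ℕ → E} (hw : WeaklyNull w)
    (hdisj : Pairwise fun m n => |y m| ⊓ |y n| = 0)
    (hle : ∀ m, |y m| ≤ |w m|) : WeaklyNull y := by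
  intro h
  by_contra hnot
  rw [Metric.tendsto_atTop] at hnot
  push_neg at hnot
  obtain ⟨η, hη, hfreq⟩ := hnot
  have hfr : ∃ᶠ n in atTop, η ≤ |h (y n)| := by
    rw [Filter.frequently_atTop]
    intro N
    obtain ⟨n, hn1, hn2⟩ := hfreq N
    refine ⟨n, hn1, ?_⟩
    rwa [Real.dist_eq, sub_zero] at hn2
  obtain ⟨φ, hφmono, hφ⟩ := Filter.extraction_of_frequently_atTop hfr
  set w' : ℕ → E := fun p => w (φ p) with hw'def
  set z : ℕ → E := fun p => |y (φ p)| with hzdef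
  have hz0 : ∀ p, 0 ≤ z p := fun p => abs_nonneg _
  have hzw : ∀ p, z p ≤ |w' p| := fun p => hle (φ p)
  have hzdisj : ∀ p q', p ≠ q' → z p ⊓ z q' = 0 := fun p q' hpq =>
    hdisj (hφmono.injective.ne hpq)
  have hηz : ∀ p, η ≤ dualAbs h (z p) := fun p =>
    le_trans (hφ p) (abs_le_dualAbs h (hz0 p) le_rfl)
  have hw'null : WeaklyNull w' := weaklyNull_comp hw hφmono.tendsto_atTop
  obtain ⟨C, hC0, hC⟩ := weaklyNull_bounded hw'null
  -- part norms
  have hpart : ∀ j : ℕ, dualAbs h ((w' j)⁺) + dualAbs h ((w' j)⁻) ≤ 2 * ‖h‖ * C := by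
    intro j
    have n1 : ‖(w' j)⁺‖ ≤ ‖w' j‖ := by
      refine norm_le_norm_of_abs_le_abs ?_
      rw [abs_of_nonneg (posPart_nonneg _)]
      calc (w' j)⁺ ≤ (w' j)⁺ + (w' j)⁻ := le_add_of_nonneg_right (negPart_nonneg _)
      _ = |w' j| := posPart_add_negPart _
    have n2 : ‖(w' j)⁻‖ ≤ ‖w' j‖ := by
      refine norm_le_norm_of_abs_le_abs ?_
      rw [abs_of_nonneg (negPart_nonneg _)]
      calc (w' j)⁻ ≤ (w' j)⁺ + (w' j)⁻ := le_add_of_nonneg_left (posPart_nonneg _)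
      _ = |w' j| := posPart_add_negPart _
    have b1 := dualAbs_le_norm h (posPart_nonneg (w' j))
    have b2 := dualAbs_le_norm h (negPart_nonneg (w' j))
    have hCj := hC j
    have hhn : (0:ℝ) ≤ ‖h‖ := norm_nonneg h
    nlinarith [norm_nonneg (w' j)]
  -- matrix
  set mat : ℕ → ℕ → ℝ := fun j i =>
    (Qfun h (z i) ((w' i)⁺) ((w' j)⁺) + Qfun h (z i) ((w' i)⁻) ((w' j)⁺)) +
    (Qfun h (z i) ((w' i)⁺) ((w' j)⁻) + Qfun h (z i) ((w' i)⁻) ((w' j)⁻)) with hmat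
  have hmat0 : ∀ j i, 0 ≤ mat j i := by
    intro j i
    have q1 := Qfun_nonneg (h := h) (posPart_nonneg (w' j)) (hz0 i) (posPart_nonneg (w' i))
    have q2 := Qfun_nonneg (h := h) (posPart_nonneg (w' j)) (hz0 i) (negPart_nonneg (w' i))
    have q3 := Qfun_nonneg (h := h) (negPart_nonneg (w' j)) (hz0 i) (posPart_nonneg (w' i))
    have q4 := Qfun_nonneg (h := h) (negPart_nonneg (w' j)) (hz0 i) (negPart_nonneg (w' i))
    rw [hmat]
    simp only
    linarith
  have hmatrow : ∀ j (S : Finset ℕ), ∑ i ∈ S, mat j i ≤ 2 * ‖h‖ * C := by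
    intro j S
    have h1 := sum_AB_le h S z w' (posPart_nonneg (w' j)) hz0 hzdisj
    have h2 := sum_AB_le h S z w' (negPart_nonneg (w' j)) hz0 hzdisj
    have h3 : ∑ i ∈ S, mat j i =
        (∑ i ∈ S, (Qfun h (z i) ((w' i)⁺) ((w' j)⁺) + Qfun h (z i) ((w' i)⁻) ((w' j)⁺))) +
        (∑ i ∈ S, (Qfun h (z i) ((w' i)⁺) ((w' j)⁻) + Qfun h (z i) ((w' i)⁻) ((w' j)⁻))) := by
      rw [← Finset.sum_add_distrib]
    rw [h3]
    have := hpart j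
    linarith
  obtain ⟨t, htmono, htcross⟩ := matrix_extract mat (2 * ‖h‖ * C) hmat0 hmatrow (half_pos hη)
  -- summability of the component family along t
  have hsumt : ∀ (v : E), 0 ≤ v → ∀ n : ℕ, ∑ i ∈ Finset.range n,
      (Qfun h (z (t i)) ((w' (t i))⁺) v + Qfun h (z (t i)) ((w' (t i))⁻) v) ≤ dualAbs h v := by
    intro v hv n
    rw [← Finset.sum_image (g := t)
      (f := fun i => Qfun h (z i) ((w' i)⁺) v + Qfun h (z i) ((w' i)⁻) v)
      (fun i _ j _ hij => htmono.injective hij)]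
    exact sum_AB_le h _ z w' hv hz0 hzdisj
  have hsummAB : ∀ (v : E), 0 ≤ v → Summable (fun i =>
      Qfun h (z (t i)) ((w' (t i))⁺) v + Qfun h (z (t i)) ((w' (t i))⁻) v) := by
    intro v hv
    refine summable_of_sum_range_le (c := dualAbs h v) (fun i => ?_) (hsumt v hv)
    have q1 := Qfun_nonneg (h := h) hv (hz0 (t i)) (posPart_nonneg (w' (t i)))
    have q2 := Qfun_nonneg (h := h) hv (hz0 (t i)) (negPart_nonneg (w' (t i)))
    linarith
  have htsumAB : ∀ (v : E), 0 ≤ v → (∑' i, (Qfun h (z (t i)) ((w' (t i))⁺) v +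
      Qfun h (z (t i)) ((w' (t i))⁻) v)) ≤ dualAbs h v := by
    intro v hv
    exact Summable.tsum_le_of_sum_range_le (hsummAB v hv) (hsumt v hv)
  have hsummDiff : ∀ (v : E), 0 ≤ v → Summable (fun i =>
      Qfun h (z (t i)) ((w' (t i))⁺) v - Qfun h (z (t i)) ((w' (t i))⁻) v) := by
    intro v hv
    refine Summable.of_abs ?_
    refine Summable.of_nonneg_of_le (fun i => abs_nonneg _) (fun i => ?_) (hsummAB v hv)
    have q1 := Qfun_nonneg (h := h) hv (hz0 (t i)) (posPart_nonneg (w' (t i)))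
    have q2 := Qfun_nonneg (h := h) hv (hz0 (t i)) (negPart_nonneg (w' (t i)))
    rw [abs_le]
    constructor <;> linarith
  -- the cone functional
  set q : E → ℝ := fun v => ∑' i,
    (Qfun h (z (t i)) ((w' (t i))⁺) v - Qfun h (z (t i)) ((w' (t i))⁻) v) with hqdef
  have hqadd : ∀ a b : E, 0 ≤ a → 0 ≤ b → q (a + b) = q a + q b := by
    intro a b ha hb
    rw [hqdef]
    simp only
    have hcong : ∀ i : ℕ,
        Qfun h (z (t i)) ((w' (t i))⁺) (a+b) - Qfun h (z (t i)) ((w' (t i))⁻) (a+b) =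
        (Qfun h (z (t i)) ((w' (t i))⁺) a - Qfun h (z (t i)) ((w' (t i))⁻) a) +
        (Qfun h (z (t i)) ((w' (t i))⁺) b - Qfun h (z (t i)) ((w' (t i))⁻) b) := by
      intro i
      rw [Qfun_add ha hb (hz0 (t i)) (posPart_nonneg _),
        Qfun_add ha hb (hz0 (t i)) (negPart_nonneg _)]
      ring
    rw [tsum_congr hcong]
    exact Summable.tsum_add (hsummDiff a ha) (hsummDiff b hb)
  have hqbd : ∀ a : E, 0 ≤ a → |q a| ≤ ‖h‖ * ‖a‖ := by
    intro a ha
    have h1 : |q a| ≤ ∑' i, |Qfun h (z (t i)) ((w' (t i))⁺) a -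
        Qfun h (z (t i)) ((w' (t i))⁻) a| := by
      rw [hqdef]
      simp only
      have := norm_tsum_le_tsum_norm (f := fun i =>
        Qfun h (z (t i)) ((w' (t i))⁺) a - Qfun h (z (t i)) ((w' (t i))⁻) a) ?_
      · simpa [Real.norm_eq_abs] using this
      · have habs : Summable (fun i => |Qfun h (z (t i)) ((w' (t i))⁺) a -
            Qfun h (z (t i)) ((w' (t i))⁻) a|) := by
          refine Summable.of_nonneg_of_le (fun i => abs_nonneg _) (fun i => ?_) (hsummAB a ha)
          have q1 := Qfun_nonneg (h := h) ha (hz0 (t i)) (posPart_nonneg (w' (t i)))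
          have q2 := Qfun_nonneg (h := h) ha (hz0 (t i)) (negPart_nonneg (w' (t i)))
          rw [abs_le]
          constructor <;> linarith
        simpa [Real.norm_eq_abs] using habs
    have h2 : (∑' i, |Qfun h (z (t i)) ((w' (t i))⁺) a -
        Qfun h (z (t i)) ((w' (t i))⁻) a|) ≤ ∑' i, (Qfun h (z (t i)) ((w' (t i))⁺) a +
        Qfun h (z (t i)) ((w' (t i))⁻) a) := by
      refine Summable.tsum_le_tsum (fun i => ?_) ?_ (hsummAB a ha)
      · have q1 := Qfun_nonneg (h := h) ha (hz0 (t i)) (posPart_nonneg (w' (t i)))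
        have q2 := Qfun_nonneg (h := h) ha (hz0 (t i)) (negPart_nonneg (w' (t i)))
        rw [abs_le]
        constructor <;> linarith
      · refine Summable.of_nonneg_of_le (fun i => abs_nonneg _) (fun i => ?_) (hsummAB a ha)
        have q1 := Qfun_nonneg (h := h) ha (hz0 (t i)) (posPart_nonneg (w' (t i)))
        have q2 := Qfun_nonneg (h := h) ha (hz0 (t i)) (negPart_nonneg (w' (t i)))
        rw [abs_le]
        constructor <;> linarith
    have h3 := htsumAB a ha
    have h4 := dualAbs_le_norm h ha
    linarith
  obtain ⟨Θ, hΘ⟩ := cone_extension q ‖h‖ hqadd hqbd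
  -- big values of Θ along the subsequence
  have hbig : ∀ j : ℕ, η/2 ≤ Θ (w' (t j)) := by
    intro j
    set P : E := (w' (t j))⁺ with hP
    set N : E := (w' (t j))⁻ with hN
    have hP0 : 0 ≤ P := posPart_nonneg _
    have hN0 : 0 ≤ N := negPart_nonneg _
    -- termwise difference
    set Sfn : ℕ → ℝ := fun i =>
      (Qfun h (z (t i)) ((w' (t i))⁺) P - Qfun h (z (t i)) ((w' (t i))⁻) P) -
      (Qfun h (z (t i)) ((w' (t i))⁺) N - Qfun h (z (t i)) ((w' (t i))⁻) N) with hSfn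
    have hSsumm : Summable Sfn := (hsummDiff P hP0).sub (hsummDiff N hN0)
    have hΘval : Θ (w' (t j)) = ∑' i, Sfn i := by
      rw [hΘ (w' (t j))]
      rw [hqdef]
      simp only
      rw [← Summable.tsum_sub (hsummDiff P hP0) (hsummDiff N hN0)]
    -- diagonal term
    have hdiag : η ≤ Sfn j := by
      have e1 : Qfun h (z (t j)) ((w' (t j))⁻) P = 0 :=
        Qfun_eq_zero hP0 (hz0 (t j)) hN0 (posPart_inf_negPart_eq_zero _)
      have e2 : Qfun h (z (t j)) ((w' (t j))⁺) N = 0 := by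
        refine Qfun_eq_zero hN0 (hz0 (t j)) hP0 ?_
        rw [inf_comm]
        exact posPart_inf_negPart_eq_zero _
      have e3 : dualAbs h (P ⊓ z (t j)) ≤ Qfun h (z (t j)) ((w' (t j))⁺) P := by
        have harg : P ⊓ (1:ℕ) • z (t j) ⊓ (1:ℕ) • P = P ⊓ z (t j) := by
          rw [one_nsmul, one_nsmul]
          exact le_antisymm inf_le_left (le_inf le_rfl inf_le_left)
        have := Qseq_le_Qfun (h := h) hP0 (hz0 (t j)) hP0 1
        rwa [Qseq, harg] at this
      have e4 : dualAbs h (N ⊓ z (t j)) ≤ Qfun h (z (t j)) ((w' (t j))⁻) N := by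
        have harg : N ⊓ (1:ℕ) • z (t j) ⊓ (1:ℕ) • N = N ⊓ z (t j) := by
          rw [one_nsmul, one_nsmul]
          exact le_antisymm inf_le_left (le_inf le_rfl inf_le_left)
        have := Qseq_le_Qfun (h := h) hN0 (hz0 (t j)) hN0 1
        rwa [Qseq, harg] at this
      have e5 : dualAbs h (P ⊓ z (t j)) + dualAbs h (N ⊓ z (t j)) ≥ dualAbs h (z (t j)) := by
        have hsum : z (t j) ≤ P ⊓ z (t j) + N ⊓ z (t j) := by
          have h1 : (P + N) ⊓ z (t j) ≤ P ⊓ z (t j) + N ⊓ z (t j) :=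
            inf_add_le_of_nonneg hP0 hN0 (hz0 (t j))
          have h2 : (P + N) ⊓ z (t j) = z (t j) := by
            rw [hP, hN, posPart_add_negPart]
            exact inf_eq_right.mpr (hzw (t j))
          rwa [h2] at h1
        calc dualAbs h (z (t j)) ≤ dualAbs h (P ⊓ z (t j) + N ⊓ z (t j)) :=
              dualAbs_mono h (hz0 (t j)) hsum
        _ = dualAbs h (P ⊓ z (t j)) + dualAbs h (N ⊓ z (t j)) :=
              dualAbs_add h (le_inf hP0 (hz0 (t j))) (le_inf hN0 (hz0 (t j)))
      have := hηz (t j)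
      rw [hSfn]
      simp only
      rw [e1, e2]
      linarith
    -- off-diagonal bound
    have hoff : ∀ i, |if i = j then 0 else Sfn i| ≤ (if i = j then 0 else mat (t j) (t i)) := by
      intro i
      by_cases hij : i = j
      · simp [hij]
      · simp only [hij, if_false]
        have q1 := Qfun_nonneg (h := h) hP0 (hz0 (t i)) (posPart_nonneg (w' (t i)))
        have q2 := Qfun_nonneg (h := h) hP0 (hz0 (t i)) (negPart_nonneg (w' (t i)))
        have q3 := Qfun_nonneg (h := h) hN0 (hz0 (t i)) (posPart_nonneg (w' (t i)))
        have q4 := Qfun_nonneg (h := h) hN0 (hz0 (t i)) (negPart_nonneg (w' (t i)))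
        rw [hSfn, hmat]
        simp only
        rw [abs_le]
        constructor <;> linarith
    have hsummOff : Summable (fun i => if i = j then 0 else Sfn i) := by
      refine Summable.of_abs ?_
      refine Summable.of_nonneg_of_le (fun i => abs_nonneg _) (fun i => ?_)
        (((hsummAB P hP0).add (hsummAB N hN0)))
      by_cases hij : i = j
      · simp only [hij, if_true]
        have q1 := Qfun_nonneg (h := h) hP0 (hz0 (t j)) (posPart_nonneg (w' (t j)))
        have q2 := Qfun_nonneg (h := h) hP0 (hz0 (t j)) (negPart_nonneg (w' (t j)))
        have q3 := Qfun_nonneg (h := h) hN0 (hz0 (t j)) (posPart_nonneg (w' (t j)))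
        have q4 := Qfun_nonneg (h := h) hN0 (hz0 (t j)) (negPart_nonneg (w' (t j)))
        simp only [abs_zero]
        linarith
      · simp only [hij, if_false]
        have q1 := Qfun_nonneg (h := h) hP0 (hz0 (t i)) (posPart_nonneg (w' (t i)))
        have q2 := Qfun_nonneg (h := h) hP0 (hz0 (t i)) (negPart_nonneg (w' (t i)))
        have q3 := Qfun_nonneg (h := h) hN0 (hz0 (t i)) (posPart_nonneg (w' (t i)))
        have q4 := Qfun_nonneg (h := h) hN0 (hz0 (t i)) (negPart_nonneg (w' (t i)))
        rw [hSfn]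
        simp only
        rw [abs_le]
        constructor <;> linarith
    have hofftsum : |∑' i, if i = j then 0 else Sfn i| ≤ η/2 := by
      have habs : Summable (fun i => |if i = j then 0 else Sfn i|) := by
        refine Summable.of_nonneg_of_le (fun i => abs_nonneg _) (fun i => ?_)
          (((hsummAB P hP0).add (hsummAB N hN0)))
        refine le_trans (hoff i) ?_
        by_cases hij : i = j
        · simp only [hij, if_true]
          have q1 := Qfun_nonneg (h := h) hP0 (hz0 (t j)) (posPart_nonneg (w' (t j)))
          have q2 := Qfun_nonneg (h := h) hP0 (hz0 (t j)) (negPart_nonneg (w' (t j)))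
          have q3 := Qfun_nonneg (h := h) hN0 (hz0 (t j)) (posPart_nonneg (w' (t j)))
          have q4 := Qfun_nonneg (h := h) hN0 (hz0 (t j)) (negPart_nonneg (w' (t j)))
          linarith
        · simp only [hij, if_false]
          all_goals exact le_rfl
      have h1 : |∑' i, if i = j then 0 else Sfn i| ≤ ∑' i, |if i = j then 0 else Sfn i| := by
        have := norm_tsum_le_tsum_norm (f := fun i => if i = j then 0 else Sfn i)
          (by simpa [Real.norm_eq_abs] using habs)
        simpa [Real.norm_eq_abs] using this
      refine le_trans h1 ?_
      refine Summable.tsum_le_of_sum_le habs ?_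
      intro Sfin
      have hstep : ∑ i ∈ Sfin, |if i = j then 0 else Sfn i| =
          ∑ i ∈ Sfin.erase j, |if i = j then 0 else Sfn i| :=
        (Finset.sum_erase Sfin (by simp)).symm
      rw [hstep]
      have hstep2 : ∑ i ∈ Sfin.erase j, |if i = j then 0 else Sfn i| ≤
          ∑ i ∈ Sfin.erase j, mat (t j) (t i) := by
        refine Finset.sum_le_sum fun i hi => ?_
        have hij : i ≠ j := Finset.ne_of_mem_erase hi
        have := hoff i
        simpa [hij] using this
      exact le_trans hstep2 (htcross j Sfin)
    -- assemble
    have hsplit : ∑' i, Sfn i = Sfn j + ∑' i, if i = j then 0 else Sfn i :=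
      Summable.tsum_eq_add_tsum_ite hSsumm j
    rw [hΘval, hsplit]
    have h01 := (abs_le.mp hofftsum).1
    have h02 := add_le_add hdiag h01
    refine le_trans (by linarith : η/2 ≤ η + -(η/2)) h02
  -- contradiction with weak nullity
  have htend : Tendsto (fun j => Θ (w' (t j))) atTop (𝓝 0) :=
    (weaklyNull_comp hw'null htmono.tendsto_atTop) Θ
  have hge : (0:ℝ) ≥ η/2 := ge_of_tendsto htend (Filter.Eventually.of_forall hbig)
  linarith

end LemmaD

/-- Lemma (1): if A is an almost L-set in E′ and (fₙ) is a sequence in Sol(A) with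
|fₙ| → 0 weak*, then (fₙ) is an L-sequence. -/
theorem lSequence_of_solidHull_almostLSet {E : Type*} [NormedAddCommGroup E] [Lattice E] [HasSolidNorm E] [IsOrderedAddMonoid E] [NormedSpace ℝ E] [CompleteSpace E]
    (A : Set (E →L[ℝ] ℝ)) (hA : AlmostLSet A)
    (f : ℕ → E →L[ℝ] ℝ)
    (hsol : ∀ n, ∃ g ∈ A, DualAbsLE (f n) g)
    (habs : ∀ x : E, 0 ≤ x → Tendsto (fun n => dualAbs (f n) x) atTop (𝓝 0)) :
    IsLSequence f := by
  classical
  choose g hgA hgle using hsol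
  intro x hxnull ε hε
  by_cases hclaim : ∃ u : E, 0 ≤ u ∧ ∀ n k, dualAbs (g n) ((|x k| - u)⁺) ≤ ε/4
  · -- Claim holds: conclude directly
    obtain ⟨u, hu0, hu⟩ := hclaim
    have h1 : ∀ᶠ n in atTop, dualAbs (f n) u < ε/2 :=
      (habs u hu0).eventually (gt_mem_nhds (by linarith))
    rw [eventually_atTop] at h1
    obtain ⟨N₁, hN₁⟩ := h1
    have h3 : ∀ᶠ k in atTop, ∀ n ∈ Finset.range N₁, |f n (x k)| < ε := by
      rw [Filter.eventually_all_finset]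
      intro n _
      have h2 : Tendsto (fun k => |f n (x k)|) atTop (𝓝 0) := by
        have := (hxnull (f n)).abs
        rwa [abs_zero] at this
      exact h2.eventually (gt_mem_nhds hε)
    rw [eventually_atTop] at h3
    obtain ⟨N₂, hN₂⟩ := h3
    refine ⟨N₂, fun k hk f' hf' => ?_⟩
    obtain ⟨n, rfl⟩ := hf'
    rcases lt_or_ge n N₁ with hn | hn
    · exact (hN₂ k hk n (Finset.mem_range.mpr hn)).le
    · have hxk : (0:E) ≤ |x k| := abs_nonneg _
      have hdecomp : |x k| = (|x k| - u)⁺ + |x k| ⊓ u := (posPart_add_inf' _ _).symm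
      have e1 : |f n (x k)| ≤ dualAbs (f n) (|x k|) := abs_le_dualAbs _ hxk le_rfl
      have e2 : dualAbs (f n) (|x k|) ≤
          dualAbs (f n) ((|x k| - u)⁺) + dualAbs (f n) (|x k| ⊓ u) := by
        calc dualAbs (f n) (|x k|) = dualAbs (f n) ((|x k| - u)⁺ + |x k| ⊓ u) := by
              rw [← hdecomp]
        _ ≤ _ := dualAbs_subadd _ (posPart_nonneg _) (le_inf hxk hu0)
      have e3 : dualAbs (f n) ((|x k| - u)⁺) ≤ dualAbs (g n) ((|x k| - u)⁺) :=
        hgle n _ (posPart_nonneg _)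
      have e4 : dualAbs (f n) (|x k| ⊓ u) ≤ dualAbs (f n) u :=
        dualAbs_mono _ (le_inf hxk hu0) inf_le_right
      have e5 := hu n k
      have e6 := hN₁ n hn
      linarith
  · -- Claim fails: derive a contradiction
    exfalso
    push_neg at hclaim
    obtain ⟨C, hC0, hCb⟩ := weaklyNull_bounded hxnull
    -- inductive construction of the bad pairs
    have hstep : ∀ (m : ℕ) (st : {sv : E // 0 ≤ sv} × ℕ × ℕ),
        ∃ st' : {sv : E // 0 ≤ sv} × ℕ × ℕ,
          (st'.1 : E) = (st.1 : E) + |x st'.2.2| ∧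
          ε/4 < dualAbs (g st'.2.1) ((|x st'.2.2| - (8:ℝ)^m • (st.1 : E))⁺) := by
      intro m st
      have hu8 : (0:E) ≤ (8:ℝ)^m • (st.1 : E) := rsmul_nonneg (by positivity) st.1.2
      obtain ⟨n, k, hnk⟩ := hclaim ((8:ℝ)^m • (st.1 : E)) hu8
      exact ⟨⟨⟨(st.1 : E) + |x k|, add_nonneg st.1.2 (abs_nonneg _)⟩, n, k⟩, rfl, hnk⟩
    obtain ⟨F, hF0, hFstep⟩ := exists_rec_aux (⟨⟨0, le_rfl⟩, 0, 0⟩) _ hstep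
    set kk : ℕ → ℕ := fun m => (F (m+1)).2.2 with hkk
    set nn : ℕ → ℕ := fun m => (F (m+1)).2.1 with hnn
    set s : ℕ → E := fun m => ((F m).1 : E) with hs
    have hs0 : s 0 = 0 := by
      show ((F 0).1 : E) = 0
      rw [hF0]
    have hsrec : ∀ m, s (m+1) = s m + |x (kk m)| := fun m => (hFstep m).1
    have hsnn : ∀ m, 0 ≤ s m := fun m => (F m).1.2
    have hbig : ∀ m, ε/4 < dualAbs (g (nn m)) ((|x (kk m)| - (8:ℝ)^m • s m)⁺) :=
      fun m => (hFstep m).2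
    have hsum : ∀ m, s m = ∑ i ∈ Finset.range m, |x (kk i)| := by
      intro m
      induction m with
      | zero => simpa using hs0
      | succ m ih => rw [hsrec m, ih, Finset.sum_range_succ]
    have hsle : ∀ i m, i < m → |x (kk i)| ≤ s m := by
      intro i m him
      rw [hsum m]
      exact Finset.single_le_sum (f := fun i => |x (kk i)|)
        (fun j _ => abs_nonneg _) (Finset.mem_range.mpr him)
    -- distinctness of the kk
    have hkinj : Function.Injective kk := by
      have haux : ∀ i m, i < m → kk i ≠ kk m := by
        intro i m him heq
        have h1 : |x (kk m)| ≤ (8:ℝ)^m • s m := by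
          calc |x (kk m)| = |x (kk i)| := by rw [heq]
          _ ≤ s m := hsle i m him
          _ = (1:ℝ) • s m := (one_smul ℝ _).symm
          _ ≤ (8:ℝ)^m • s m := rsmul_le_rsmul_right (one_le_pow₀ (by norm_num)) (hsnn m)
        have h2 : (|x (kk m)| - (8:ℝ)^m • s m)⁺ = 0 :=
          posPart_eq_zero.mpr (sub_nonpos.mpr h1)
        have h3 := hbig m
        rw [h2, dualAbs_zero] at h3
        linarith
      intro i m him
      by_contra hne
      rcases lt_or_gt_of_ne hne with h | h
      · exact haux i m h him
      · exact haux m i h him.symm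
    -- the element X
    have hXsummable : Summable (fun m => ((1:ℝ)/2)^m • |x (kk m)|) := by
      refine Summable.of_norm_bounded (g := fun m => C * ((1:ℝ)/2)^m) ?_ ?_
      · exact (summable_geometric_two).mul_left C
      · intro m
        rw [norm_smul, Real.norm_eq_abs, abs_of_pos (by positivity), norm_abs_eq_norm]
        calc ((1:ℝ)/2)^m * ‖x (kk m)‖ ≤ ((1:ℝ)/2)^m * C := by
              have := hCb (kk m)
              have hp : (0:ℝ) ≤ ((1:ℝ)/2)^m := by positivity
              nlinarith
        _ = C * ((1:ℝ)/2)^m := mul_comm _ _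
    set X : E := ∑' m, ((1:ℝ)/2)^m • |x (kk m)| with hXdef
    have hterm0 : ∀ m : ℕ, (0:E) ≤ ((1:ℝ)/2)^m • |x (kk m)| :=
      fun m => rsmul_nonneg (by positivity) (abs_nonneg _)
    have hX0 : 0 ≤ X := tsum_nonneg hterm0
    have hXle : ∀ m, |x (kk m)| ≤ (2:ℝ)^m • X := by
      intro m
      have h1 : ((1:ℝ)/2)^m • |x (kk m)| ≤ X :=
        Summable.le_tsum hXsummable m (fun i _ => hterm0 i)
      have h2 : (2:ℝ)^m * ((1:ℝ)/2)^m = 1 := by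
        rw [← mul_pow]
        norm_num
      calc |x (kk m)| = ((2:ℝ)^m * ((1:ℝ)/2)^m) • |x (kk m)| := by rw [h2, one_smul]
      _ = (2:ℝ)^m • (((1:ℝ)/2)^m • |x (kk m)|) := by rw [smul_smul]
      _ ≤ (2:ℝ)^m • X := rsmul_le_rsmul (by positivity) h1
    -- the small coefficients
    set δ : ℕ → ℝ := fun m => min ((ε/4) / (2 * (1 + ‖g (nn m)‖ * ‖X‖))) 1 with hδdef
    have hδpos : ∀ m, 0 < δ m := by
      intro m
      refine lt_min ?_ one_pos
      have hD : (0:ℝ) < 2 * (1 + ‖g (nn m)‖ * ‖X‖) := by positivity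
      positivity
    -- the disjointified sequence
    set v : ℕ → E := fun m => (|x (kk m)| - (8:ℝ)^m • s m - δ m • X)⁺ with hv
    have hv0 : ∀ m, 0 ≤ v m := fun m => posPart_nonneg _
    have hvle : ∀ m, v m ≤ |x (kk m)| := by
      intro m
      rw [hv]
      simp only
      have h1 : |x (kk m)| - (8:ℝ)^m • s m - δ m • X ≤ |x (kk m)| := by
        have a1 : (0:E) ≤ (8:ℝ)^m • s m := rsmul_nonneg (by positivity) (hsnn m)
        have a2 : (0:E) ≤ δ m • X := rsmul_nonneg (hδpos m).le hX0
        calc |x (kk m)| - (8:ℝ)^m • s m - δ m • X ≤ |x (kk m)| - (8:ℝ)^m • s m :=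
              sub_le_self _ a2
        _ ≤ |x (kk m)| := sub_le_self _ a1
      calc (|x (kk m)| - (8:ℝ)^m • s m - δ m • X)⁺ ≤ (|x (kk m)|)⁺ := posPart_mono' h1
      _ = |x (kk m)| := posPart_eq_self.mpr (abs_nonneg _)
    have hvbig : ∀ m, ε/8 < dualAbs (g (nn m)) (v m) := by
      intro m
      have hδX : (0:E) ≤ δ m • X := rsmul_nonneg (hδpos m).le hX0
      have hsplit : (|x (kk m)| - (8:ℝ)^m • s m)⁺ ≤ v m + δ m • X := by
        have := posPart_le_sub_posPart_add (t := |x (kk m)| - (8:ℝ)^m • s m)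
          (c := δ m • X) hδX
        rwa [hv]
      have h2 : dualAbs (g (nn m)) ((|x (kk m)| - (8:ℝ)^m • s m)⁺) ≤
          dualAbs (g (nn m)) (v m) + dualAbs (g (nn m)) (δ m • X) := by
        calc dualAbs (g (nn m)) ((|x (kk m)| - (8:ℝ)^m • s m)⁺) ≤
            dualAbs (g (nn m)) (v m + δ m • X) :=
              dualAbs_mono _ (posPart_nonneg _) hsplit
        _ ≤ _ := dualAbs_subadd _ (hv0 m) hδX
      have h3 : dualAbs (g (nn m)) (δ m • X) ≤ ε/8 := by
        have b1 : dualAbs (g (nn m)) (δ m • X) ≤ ‖g (nn m)‖ * ‖δ m • X‖ :=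
          dualAbs_le_norm _ hδX
        have b2 : ‖δ m • X‖ = δ m * ‖X‖ := by
          rw [norm_smul, Real.norm_eq_abs, abs_of_pos (hδpos m)]
        rw [b2] at b1
        set D : ℝ := 1 + ‖g (nn m)‖ * ‖X‖ with hD
        have hD1 : (1:ℝ) ≤ D := by
          rw [hD]
          have : (0:ℝ) ≤ ‖g (nn m)‖ * ‖X‖ := by positivity
          linarith
        have hD0 : (0:ℝ) < D := by linarith
        have hδle : δ m ≤ (ε/4) / (2*D) := min_le_left _ _
        have hgX : ‖g (nn m)‖ * ‖X‖ = D - 1 := by rw [hD]; ring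
        have b3 : ‖g (nn m)‖ * (δ m * ‖X‖) = δ m * (D - 1) := by
          rw [← hgX]; ring
        rw [b3] at b1
        have b4 : δ m * (D - 1) ≤ ((ε/4)/(2*D)) * (D - 1) :=
          mul_le_mul_of_nonneg_right hδle (by linarith)
        have b5 : ((ε/4)/(2*D)) * (D - 1) ≤ ε/8 := by
          rw [div_mul_eq_mul_div, div_le_iff₀ (by linarith : (0:ℝ) < 2*D)]
          nlinarith
        linarith
      have h4 := hbig m
      linarith
    -- pairwise disjointness under the growth condition
    have hvdisj : ∀ l m, l < m → (2:ℝ)^m ≤ (8:ℝ)^m * δ l → v l ⊓ v m = 0 := by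
      intro l m hlm hcond
      set a : E := |x (kk l)| with ha
      have ha0 : (0:E) ≤ a := abs_nonneg _
      have hvl : v l ≤ (a - δ l • X)⁺ := by
        rw [hv]
        simp only
        refine posPart_mono' ?_
        have a1 : (0:E) ≤ (8:ℝ)^l • s l := rsmul_nonneg (by positivity) (hsnn l)
        calc |x (kk l)| - (8:ℝ)^l • s l - δ l • X
            = |x (kk l)| - δ l • X - (8:ℝ)^l • s l := by abel
        _ ≤ |x (kk l)| - δ l • X := sub_le_self _ a1
      have hvm : v m ≤ ((2:ℝ)^m • X - (8:ℝ)^m • a)⁺ := by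
        rw [hv]
        simp only
        have a2 : (0:E) ≤ δ m • X := rsmul_nonneg (hδpos m).le hX0
        have step1 : |x (kk m)| - (8:ℝ)^m • s m - δ m • X ≤ |x (kk m)| - (8:ℝ)^m • a := by
          have h5 : (8:ℝ)^m • a ≤ (8:ℝ)^m • s m := rsmul_le_rsmul (by positivity) (hsle l m hlm)
          have h6 : |x (kk m)| - (8:ℝ)^m • s m ≤ |x (kk m)| - (8:ℝ)^m • a :=
            sub_le_sub_left h5 _
          calc |x (kk m)| - (8:ℝ)^m • s m - δ m • X ≤ |x (kk m)| - (8:ℝ)^m • s m :=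
                sub_le_self _ a2
          _ ≤ _ := h6
        have step2 : |x (kk m)| - (8:ℝ)^m • a ≤ (2:ℝ)^m • X - (8:ℝ)^m • a :=
          sub_le_sub_right (hXle m) _
        exact posPart_mono' (le_trans step1 step2)
      have hkey := key_disj (a := a) (X := X) ha0 hX0 (t := δ l) (β := (2:ℝ)^m)
        (K := (8:ℝ)^m) (hδpos l).le (one_le_pow₀ (by norm_num)) hcond
      refine le_antisymm ?_ (le_inf (hv0 l) (hv0 m))
      calc v l ⊓ v m ≤ (a - δ l • X)⁺ ⊓ ((2:ℝ)^m • X - (8:ℝ)^m • a)⁺ := inf_le_inf hvl hvm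
      _ = 0 := hkey
    -- extraction of a subsequence on which everything is disjoint
    have hσstep : ∀ (_ : ℕ) (st : ℕ × {r : ℝ // 0 < r}),
        ∃ st' : ℕ × {r : ℝ // 0 < r}, st.1 < st'.1 ∧
          (st'.2 : ℝ) = min (st.2 : ℝ) (δ st'.1) ∧ (2:ℝ)^st'.1 ≤ (8:ℝ)^st'.1 * (st.2 : ℝ) := by
      intro _ st
      have htd : Tendsto (fun m : ℕ => ((1:ℝ)/4)^m) atTop (𝓝 0) :=
        tendsto_pow_atTop_nhds_zero_of_lt_one (by norm_num) (by norm_num)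
      have hev : ∀ᶠ m in atTop, ((1:ℝ)/4)^m < (st.2 : ℝ) :=
        htd.eventually (gt_mem_nhds st.2.2)
      obtain ⟨m, hm1, hm2⟩ := (hev.and (eventually_gt_atTop st.1)).exists
      refine ⟨(m, ⟨min (st.2 : ℝ) (δ m), lt_min st.2.2 (hδpos m)⟩), hm2, rfl, ?_⟩
      have h8 : ((8:ℝ)^m) * ((1:ℝ)/4)^m = (2:ℝ)^m := by
        rw [← mul_pow]
        norm_num
      have h9 : (8:ℝ)^m * ((1:ℝ)/4)^m ≤ (8:ℝ)^m * (st.2 : ℝ) :=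
        mul_le_mul_of_nonneg_left hm1.le (by positivity)
      rw [h8] at h9
      exact h9
    obtain ⟨G, hG0, hGstep⟩ := exists_rec_aux ((0:ℕ), (⟨δ 0, hδpos 0⟩ : {r : ℝ // 0 < r})) _ hσstep
    set σ : ℕ → ℕ := fun j => (G j).1 with hσ
    set dmin : ℕ → ℝ := fun j => ((G j).2 : ℝ) with hdmin
    have hσmono : StrictMono σ := strictMono_nat_of_lt_succ fun j => (hGstep j).1
    have hdmin_le : ∀ j i, i ≤ j → dmin j ≤ δ (σ i) := by
      intro j
      induction j with
      | zero =>
          intro i hi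
          rw [Nat.le_zero] at hi
          subst hi
          show ((G 0).2 : ℝ) ≤ δ ((G 0).1)
          rw [hG0]
      | succ j ih =>
          intro i hi
          have hrec : dmin (j+1) = min (dmin j) (δ (σ (j+1))) := (hGstep j).2.1
          rcases Nat.lt_or_ge i (j+1) with h | h
          · calc dmin (j+1) ≤ dmin j := hrec ▸ min_le_left _ _
            _ ≤ δ (σ i) := ih i (by omega)
          · have : i = j+1 := by omega
            subst this
            exact hrec ▸ min_le_right _ _
    have hσcond : ∀ i j, i < j → (2:ℝ)^(σ j) ≤ (8:ℝ)^(σ j) * δ (σ i) := by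
      intro i j hij
      obtain ⟨j', rfl⟩ : ∃ j', j = j' + 1 := ⟨j - 1, by omega⟩
      have h1 := (hGstep j').2.2
      have h2 : dmin j' ≤ δ (σ i) := hdmin_le j' i (by omega)
      calc (2:ℝ)^(σ (j'+1)) ≤ (8:ℝ)^(σ (j'+1)) * dmin j' := h1
      _ ≤ (8:ℝ)^(σ (j'+1)) * δ (σ i) := mul_le_mul_of_nonneg_left h2 (by positivity)
    have hvdisjσ : ∀ i j, i ≠ j → v (σ i) ⊓ v (σ j) = 0 := by
      have haux : ∀ i j, i < j → v (σ i) ⊓ v (σ j) = 0 :=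
        fun i j hij => hvdisj (σ i) (σ j) (hσmono hij) (hσcond i j hij)
      intro i j hij
      rcases lt_or_gt_of_ne hij with h | h
      · exact haux i j h
      · rw [inf_comm]
        exact haux j i h
    -- choose witnesses
    have hwit : ∀ j : ℕ, ∃ yj : E, |yj| ≤ v (σ j) ∧ ε/8 < (g (nn (σ j))) yj := by
      intro j
      obtain ⟨yj, h1, h2⟩ := exists_witness_of_lt_dualAbs _ (hv0 (σ j)) (hvbig (σ j))
      exact ⟨yj, h1, h2⟩
    choose yy hyle hybig using hwit
    -- the witnesses form a disjoint weakly null sequence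
    have hydisj : Pairwise fun i j => |yy i| ⊓ |yy j| = 0 := by
      intro i j hij
      refine le_antisymm ?_ (le_inf (abs_nonneg _) (abs_nonneg _))
      calc |yy i| ⊓ |yy j| ≤ v (σ i) ⊓ v (σ j) := by
            refine inf_le_inf ?_ ?_
            · calc |yy i| = |(|yy i|)| := (abs_abs _).symm
              _ ≤ v (σ i) := by
                  rw [abs_of_nonneg (abs_nonneg (yy i))]
                  exact hyle i
            · calc |yy j| = |(|yy j|)| := (abs_abs _).symm
              _ ≤ v (σ j) := by
                  rw [abs_of_nonneg (abs_nonneg (yy j))]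
                  exact hyle j
      _ = 0 := hvdisjσ i j hij
    have hynull : WeaklyNull yy := by
      have hinj2 : Function.Injective (fun j => kk (σ j)) :=
        hkinj.comp hσmono.injective
      have hwnull : WeaklyNull (fun j => x (kk (σ j))) :=
        weaklyNull_comp_inj hxnull hinj2
      refine lemmaD hwnull hydisj ?_
      intro j
      calc |yy j| ≤ v (σ j) := hyle j
      _ ≤ |x (kk (σ j))| := hvle (σ j)
      _ = |(fun j => x (kk (σ j))) j| := rfl
    -- apply the almost L-set property to get the contradiction
    obtain ⟨N, hN⟩ := hA yy hydisj hynull (ε/16) (by positivity)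
    have h1 := hN N le_rfl (g (nn (σ N))) (hgA (nn (σ N)))
    have h2 := hybig N
    have h3 : (g (nn (σ N))) (yy N) ≤ |(g (nn (σ N))) (yy N)| := le_abs_self _
    linarith
end

section
/- If A is a bounded solid subset of a Banach lattice E containing a positive disjoint sequence (x_n) that is not weakly null, then a subsequence of (x_n) is equivalent to the unit vector basis of ℓ¹. -/
open Filter Topology

section MyHelpers

set_option linter.unusedSectionVars false

variable {E : Type*} [NormedAddCommGroup E] [Lattice E] [HasSolidNorm E] [IsOrderedAddMonoid E] [NormedSpace ℝ E]

private lemma aux_pow2_smul (k : ℕ) (v : E) (h : 0 ≤ (2 ^ k : ℕ) • v) : 0 ≤ v := by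
  induction k generalizing v with
  | zero => simpa using h
  | succ k ih =>
    rw [pow_succ, mul_smul] at h
    exact nsmul_two_semiclosed (ih _ h)

private lemma aux_smul_nonneg {r : ℝ} (hr : 0 ≤ r) {v : E} (hv : 0 ≤ v) : 0 ≤ r • v := by
  have hdk : ∀ k : ℕ, 0 ≤ ((⌈r * 2 ^ k⌉₊ : ℝ) / 2 ^ k) • v := by
    intro k
    have hw : 0 ≤ ((2 : ℝ) ^ k)⁻¹ • v := by
      apply aux_pow2_smul k
      rw [← Nat.cast_smul_eq_nsmul ℝ, smul_smul]
      push_cast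
      rw [mul_inv_cancel₀ (by positivity), one_smul]
      exact hv
    have heq : ((⌈r * 2 ^ k⌉₊ : ℝ) / 2 ^ k) • v = ⌈r * 2 ^ k⌉₊ • (((2 : ℝ) ^ k)⁻¹ • v) := by
      rw [← Nat.cast_smul_eq_nsmul ℝ, smul_smul, div_eq_mul_inv]
    rw [heq]
    exact nsmul_nonneg hw _
  have hlim : Tendsto (fun k : ℕ => (⌈r * 2 ^ k⌉₊ : ℝ) / 2 ^ k) atTop (𝓝 r) := by
    have h1 : ∀ k : ℕ, r ≤ (⌈r * 2 ^ k⌉₊ : ℝ) / 2 ^ k := by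
      intro k
      rw [le_div_iff₀ (by positivity)]
      exact Nat.le_ceil _
    have h2 : ∀ k : ℕ, (⌈r * 2 ^ k⌉₊ : ℝ) / 2 ^ k ≤ r + (1 / 2) ^ k := by
      intro k
      rw [div_le_iff₀ (by positivity)]
      calc (⌈r * 2 ^ k⌉₊ : ℝ) ≤ r * 2 ^ k + 1 :=
            (Nat.ceil_lt_add_one (by positivity : (0:ℝ) ≤ r * 2 ^ k)).le
        _ = (r + (1 / 2) ^ k) * 2 ^ k := by
            rw [add_mul, one_div, inv_pow, inv_mul_cancel₀ (by positivity)]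
    have hub : Tendsto (fun k : ℕ => r + (1 / 2 : ℝ) ^ k) atTop (𝓝 (r + 0)) :=
      tendsto_const_nhds.add (tendsto_pow_atTop_nhds_zero_of_lt_one (by norm_num) (by norm_num))
    rw [add_zero] at hub
    exact tendsto_of_tendsto_of_tendsto_of_le_of_le tendsto_const_nhds hub h1 h2
  exact isClosed_nonneg.mem_of_tendsto (hlim.smul_const v) (Eventually.of_forall hdk)

private lemma aux_smul_mono {r s : ℝ} (hrs : r ≤ s) {v : E} (hv : 0 ≤ v) : r • v ≤ s • v := by
  have h := aux_smul_nonneg (sub_nonneg.mpr hrs) hv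
  rw [sub_smul] at h
  exact sub_nonneg.mp h

private lemma aux_abs_smul {r : ℝ} {v : E} (hv : 0 ≤ v) : |r • v| = |r| • v := by
  rcases le_or_gt 0 r with h | h
  · rw [abs_of_nonneg (aux_smul_nonneg h hv), abs_of_nonneg h]
  · have h1 : (0:ℝ) ≤ -r := by linarith
    have h2 : 0 ≤ (-r) • v := aux_smul_nonneg h1 hv
    rw [neg_smul] at h2
    rw [abs_of_nonpos (neg_nonneg.mp h2), abs_of_neg h, neg_smul]

private lemma aux_inf_add_le {u v w : E} (hu : 0 ≤ u) (hv : 0 ≤ v) (hw : 0 ≤ w) :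
    u ⊓ (v + w) ≤ (u ⊓ v) + (u ⊓ w) := by
  have key : (u ⊓ v) + (u ⊓ w) = ((u + u) ⊓ (v + u)) ⊓ ((u + w) ⊓ (v + w)) := by
    rw [add_inf u w (u ⊓ v), inf_add u v u, inf_add u v w]
  rw [key]
  refine le_inf (le_inf ?_ ?_) (le_inf ?_ ?_)
  · exact inf_le_left.trans (le_add_of_nonneg_right hu)
  · exact inf_le_left.trans (le_add_of_nonneg_left hv)
  · exact inf_le_left.trans (le_add_of_nonneg_right hw)
  · exact inf_le_right

private lemma aux_disj_add {u v w : E} (hu : 0 ≤ u) (hv : 0 ≤ v) (hw : 0 ≤ w)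
    (h1 : u ⊓ v = 0) (h2 : u ⊓ w = 0) : u ⊓ (v + w) = 0 := by
  refine le_antisymm ?_ (le_inf hu (add_nonneg hv hw))
  calc u ⊓ (v + w) ≤ (u ⊓ v) + (u ⊓ w) := aux_inf_add_le hu hv hw
    _ = 0 := by rw [h1, h2, add_zero]

private lemma aux_disj_nsmul {u v : E} (hu : 0 ≤ u) (hv : 0 ≤ v) (h : u ⊓ v = 0) (n : ℕ) :
    u ⊓ (n • v) = 0 := by
  induction n with
  | zero => rw [zero_smul]; exact inf_of_le_right hu
  | succ n ih =>
    rw [succ_nsmul]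
    exact aux_disj_add hu (nsmul_nonneg hv n) hv ih h

private lemma aux_disj_smul {u v : E} (hu : 0 ≤ u) (hv : 0 ≤ v) (h : u ⊓ v = 0)
    {r : ℝ} (hr : 0 ≤ r) : u ⊓ (r • v) = 0 := by
  obtain ⟨n, hn⟩ := exists_nat_ge r
  have h1 : u ⊓ ((n : ℝ) • v) = 0 := by
    rw [Nat.cast_smul_eq_nsmul]
    exact aux_disj_nsmul hu hv h n
  refine le_antisymm ?_ (le_inf hu (aux_smul_nonneg hr hv))
  calc u ⊓ (r • v) ≤ u ⊓ ((n : ℝ) • v) := inf_le_inf_left u (aux_smul_mono hn hv)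
    _ = 0 := h1

private lemma aux_abs_add_disj {a b : E} (h : |a| ⊓ |b| = 0) : |a + b| = |a| + |b| := by
  have key : ∀ c d : E, |c| ⊓ |d| = 0 → |c| ≤ |c + d| := by
    intro c d hcd
    have h1 : |c| ≤ |c + d| + |d| := by
      have h2 : c = (c + d) + (-d) := by abel
      calc |c| = |(c + d) + (-d)| := by rw [← h2]
        _ ≤ |c + d| + |(-d)| := abs_add_le _ _
        _ = |c + d| + |d| := by rw [abs_neg]
    calc |c| = |c| ⊓ (|c + d| + |d|) := (inf_eq_left.mpr h1).symm
      _ ≤ (|c| ⊓ |c + d|) + (|c| ⊓ |d|) :=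
          aux_inf_add_le (abs_nonneg c) (abs_nonneg _) (abs_nonneg d)
      _ = |c| ⊓ |c + d| := by rw [hcd, add_zero]
      _ ≤ |c + d| := inf_le_right
  have ha : |a| ≤ |a + b| := key a b h
  have hb : |b| ≤ |a + b| := by
    have h' := key b a (by rwa [inf_comm])
    rwa [add_comm] at h'
  refine le_antisymm (abs_add_le a b) ?_
  calc |a| + |b| = (|a| ⊓ |b|) + (|a| ⊔ |b|) := (inf_add_sup _ _).symm
    _ = |a| ⊔ |b| := by rw [h, zero_add]
    _ ≤ |a + b| := sup_le ha hb

private lemma aux_disj_sum {u : E} (hu : 0 ≤ u) (g : ℕ → E) :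
    ∀ s : Finset ℕ, (∀ i ∈ s, 0 ≤ g i) → (∀ i ∈ s, u ⊓ g i = 0) →
      u ⊓ (∑ i ∈ s, g i) = 0 := by
  intro s
  induction s using Finset.cons_induction with
  | empty => intro _ _; rw [Finset.sum_empty]; exact inf_of_le_right hu
  | cons a s ha ih =>
    intro hg hdis
    rw [Finset.sum_cons]
    exact aux_disj_add hu (hg a (Finset.mem_cons_self a s))
      (Finset.sum_nonneg fun i hi => hg i (Finset.mem_cons_of_mem hi))
      (hdis a (Finset.mem_cons_self a s))
      (ih (fun i hi => hg i (Finset.mem_cons_of_mem hi))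
        (fun i hi => hdis i (Finset.mem_cons_of_mem hi)))

private lemma aux_key (y : ℕ → E) (hy : ∀ n, 0 ≤ y n)
    (hd : Pairwise fun m n => y m ⊓ y n = 0) (α : ℕ → ℝ) (s : Finset ℕ) :
    |∑ i ∈ s, α i • y i| = ∑ i ∈ s, |α i| • y i := by
  induction s using Finset.cons_induction with
  | empty => simp
  | cons a s ha ih =>
    rw [Finset.sum_cons, Finset.sum_cons, ← ih, ← aux_abs_smul (hy a)]
    apply aux_abs_add_disj
    rw [aux_abs_smul (hy a), ih]
    refine aux_disj_sum (aux_smul_nonneg (abs_nonneg (α a)) (hy a)) _ s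
      (fun i _ => aux_smul_nonneg (abs_nonneg _) (hy i)) (fun i hi => ?_)
    have hia : a ≠ i := fun hia => ha (hia ▸ hi)
    have step1 : y a ⊓ y i = 0 := hd hia
    have step2 : y i ⊓ (|α a| • y a) = 0 :=
      aux_disj_smul (hy i) (hy a) (by rwa [inf_comm] at step1) (abs_nonneg _)
    have step3 : (|α a| • y a) ⊓ (|α i| • y i) = 0 :=
      aux_disj_smul (aux_smul_nonneg (abs_nonneg _) (hy a)) (hy i)
        (by rwa [inf_comm] at step2) (abs_nonneg _)
    exact step3

end MyHelpers

/-- A positive disjoint sequence in a bounded solid set that is not weakly null has a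
subsequence equivalent to the unit vector basis of ℓ¹. -/
theorem disjoint_not_weaklyNull_subseq_l1 {E : Type*} [NormedAddCommGroup E] [Lattice E] [HasSolidNorm E] [IsOrderedAddMonoid E] [NormedSpace ℝ E] [CompleteSpace E]
    (A : Set E) (hA : Bornology.IsBounded A)
    (hsolid : ∀ x ∈ A, ∀ y : E, |y| ≤ |x| → y ∈ A)
    (x : ℕ → E) (hxA : ∀ n, x n ∈ A) (hxpos : ∀ n, 0 ≤ x n)
    (hdisj : Pairwise fun m n => |x m| ⊓ |x n| = 0)
    (hnot : ¬ WeaklyNull x) :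
    ∃ φ : ℕ → ℕ, StrictMono φ ∧ EquivL1Basis (fun n => x (φ n)) := by
  -- Step 1: extract a functional and a subsequence on which it is bounded below
  rw [WeaklyNull] at hnot
  push_neg at hnot
  obtain ⟨f, hf⟩ := hnot
  rw [Metric.tendsto_atTop] at hf
  push_neg at hf
  obtain ⟨ε, hε, hfreq⟩ := hf
  have hfreq' : ∃ᶠ n in atTop, ε ≤ |f (x n)| := by
    rw [frequently_atTop]
    intro N
    obtain ⟨n, hn, hdist⟩ := hfreq N
    exact ⟨n, hn, by simpa [Real.dist_eq] using hdist⟩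
  have hor : (∃ᶠ n in atTop, ε ≤ f (x n)) ∨ (∃ᶠ n in atTop, ε ≤ (-f) (x n)) := by
    rw [← frequently_or_distrib]
    refine hfreq'.mono fun n hn => ?_
    rcases le_abs.mp hn with h | h
    · exact Or.inl h
    · exact Or.inr (by simpa using h)
  obtain ⟨g, hgfreq⟩ : ∃ g : E →L[ℝ] ℝ, ∃ᶠ n in atTop, ε ≤ g (x n) := by
    rcases hor with h | h
    · exact ⟨f, h⟩
    · exact ⟨-f, h⟩
  obtain ⟨φ, hφ, hgφ⟩ := extraction_of_frequently_atTop hgfreq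
  refine ⟨φ, hφ, ?_⟩
  -- Step 2: bounds
  obtain ⟨r, hr⟩ := hA.subset_closedBall (0 : E)
  set M : ℝ := max r 1 with hM
  have hMpos : 0 < M := lt_of_lt_of_le one_pos (le_max_right r 1)
  have hxM : ∀ n, ‖x n‖ ≤ M := fun n =>
    le_trans (by simpa using (mem_closedBall_iff_norm.mp (hr (hxA n)))) (le_max_left r 1)
  have hg0 : g ≠ 0 := by
    intro h
    rw [h] at hgφ
    have := hgφ 0
    simp at this
    linarith
  have hgn : 0 < ‖g‖ := norm_pos_iff.mpr hg0
  -- disjointness of the subsequence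
  have hdisj' : Pairwise fun m n => x (φ m) ⊓ x (φ n) = 0 := by
    intro m n hmn
    have h := hdisj (fun h => hmn (hφ.injective h))
    simp only at h
    rwa [abs_of_nonneg (hxpos _), abs_of_nonneg (hxpos _)] at h
  refine ⟨ε / ‖g‖, M, div_pos hε hgn, fun s α => ?_⟩
  have hkey : |∑ i ∈ s, α i • x (φ i)| = ∑ i ∈ s, |α i| • x (φ i) :=
    aux_key (fun n => x (φ n)) (fun n => hxpos _) hdisj' α s
  constructor
  · -- lower bound
    have h1 : ε * ∑ i ∈ s, |α i| ≤ g (∑ i ∈ s, |α i| • x (φ i)) := by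
      rw [map_sum, Finset.mul_sum]
      refine Finset.sum_le_sum fun i _ => ?_
      rw [map_smul, smul_eq_mul, mul_comm ε]
      exact mul_le_mul_of_nonneg_left (hgφ i) (abs_nonneg _)
    have h2 : g (∑ i ∈ s, |α i| • x (φ i)) ≤ ‖g‖ * ‖∑ i ∈ s, |α i| • x (φ i)‖ := by
      refine le_trans (le_abs_self _) ?_
      rw [← Real.norm_eq_abs]
      exact g.le_opNorm _
    have h3 : ‖∑ i ∈ s, |α i| • x (φ i)‖ = ‖∑ i ∈ s, α i • x (φ i)‖ := by
      have habs : |∑ i ∈ s, |α i| • x (φ i)| = |∑ i ∈ s, α i • x (φ i)| := by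
        rw [hkey, abs_of_nonneg]
        exact Finset.sum_nonneg fun i _ => aux_smul_nonneg (abs_nonneg _) (hxpos _)
      exact le_antisymm (norm_le_norm_of_abs_le_abs habs.le)
        (norm_le_norm_of_abs_le_abs habs.ge)
    have h4 : ε * ∑ i ∈ s, |α i| ≤ ‖g‖ * ‖∑ i ∈ s, α i • x (φ i)‖ := by
      rw [← h3]; exact h1.trans h2
    rw [div_mul_eq_mul_div, div_le_iff₀ hgn, mul_comm _ ‖g‖]
    linarith
  · -- upper bound
    calc ‖∑ i ∈ s, α i • x (φ i)‖ ≤ ∑ i ∈ s, ‖α i • x (φ i)‖ := norm_sum_le _ _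
      _ ≤ ∑ i ∈ s, |α i| * M := by
          refine Finset.sum_le_sum fun i _ => ?_
          rw [norm_smul, Real.norm_eq_abs]
          exact mul_le_mul_of_nonneg_left (hxM _) (abs_nonneg _)
      _ = M * ∑ i ∈ s, |α i| := by rw [Finset.mul_sum]; exact Finset.sum_congr rfl fun i _ => mul_comm _ _
end
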